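/- arXiv:1211.2156 — 8 statements merged into one kernel-verified Lean document; each statement's English description precedes it below -/
import Mathlib

section
/- Let n ≥ 1 and let φ: ℝ → ℝ be a bounded continuously differentiable function with s := sup_{x∈ℝ}|φ'(x)| < 1. Then the map x ↦ x − φ(x) is a bijection of ℝ onto ℝ, and for every real p ∈ [1, ∞) and all Borel measurable functions F, G: ℝ → ℝⁿ one has ‖F − G∘(Id−φ)⁻¹‖_{L^p(ℝ)} ≤ (1 + s)^{1/p} · ‖F∘(Id−φ) − G‖_{L^p(ℝ)}. -/
open MeasureTheory ENNReal

/-- inverse modulation bound, first part of Lemma `switchlem`.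
If `φ : ℝ → ℝ` is bounded, `C¹`, with `s := sup |φ'| < 1`, then `x ↦ x - φ x` is a
bijection of `ℝ`, and for every real `p ∈ [1,∞)` and Borel measurable `F G : ℝ → ℝⁿ`,
`‖F - G ∘ (Id - φ)⁻¹‖_{L^p} ≤ (1+s)^{1/p} ‖F ∘ (Id - φ) - G‖_{L^p}`. -/
theorem stmt_0 (n : ℕ) (hn : 1 ≤ n) (φ : ℝ → ℝ)
    (hφ : ContDiff ℝ 1 φ) (hφbdd : ∃ M : ℝ, ∀ x, |φ x| ≤ M)
    (s : ℝ) (hs : IsLUB (Set.range fun x => |deriv φ x|) s) (hs1 : s < 1) :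
    Function.Bijective (fun x : ℝ => x - φ x) ∧
      ∀ p : ℝ, 1 ≤ p → ∀ F G : ℝ → EuclideanSpace ℝ (Fin n),
        Measurable F → Measurable G →
        eLpNorm (fun x => F x - G (Function.invFun (fun y : ℝ => y - φ y) x))
            (ENNReal.ofReal p) volume ≤
          ENNReal.ofReal ((1 + s) ^ (1 / p)) *
            eLpNorm (fun x => F (x - φ x) - G x) (ENNReal.ofReal p) volume := by
  set ψ : ℝ → ℝ := fun x => x - φ x with hψ
  have hφdiff : Differentiable ℝ φ := hφ.differentiable one_ne_zero
  have hderiv : ∀ x, HasDerivAt ψ (1 - deriv φ x) x := fun x =>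
    (hasDerivAt_id x).sub (hφdiff x).hasDerivAt
  have hbound : ∀ x, |deriv φ x| ≤ s := fun x => hs.1 ⟨x, rfl⟩
  have hs0 : 0 ≤ s := le_trans (abs_nonneg _) (hbound 0)
  -- bijectivity
  have hmono : StrictMono ψ := by
    apply strictMono_of_deriv_pos
    intro x
    rw [(hderiv x).deriv]
    have := (abs_le.1 (hbound x)).2
    linarith
  obtain ⟨M, hM⟩ := hφbdd
  have hcont : Continuous ψ := continuous_id.sub hφ.continuous
  have htop : Filter.Tendsto ψ Filter.atTop Filter.atTop := by
    apply Filter.tendsto_atTop_mono (fun x => by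
      have := (abs_le.1 (hM x)).2; simp only [hψ, id_eq]; linarith)
      (Filter.tendsto_atTop_add_const_right _ (-M) Filter.tendsto_id)
  have hbot : Filter.Tendsto ψ Filter.atBot Filter.atBot := by
    apply Filter.tendsto_atBot_mono (fun x => by
      have := (abs_le.1 (hM x)).1; simp only [hψ, id_eq]; linarith)
      (Filter.tendsto_atBot_add_const_right _ M Filter.tendsto_id)
  have hbij : Function.Bijective ψ := ⟨hmono.injective, hcont.surjective htop hbot⟩
  refine ⟨hbij, ?_⟩
  intro p hp F G hF hG
  have hp0 : 0 < p := lt_of_lt_of_le one_pos hp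
  have hli : Function.LeftInverse (Function.invFun ψ) ψ :=
    Function.leftInverse_invFun hbij.1
  -- change of variables
  set g : ℝ → ℝ≥0∞ := fun x => (‖F x - G (Function.invFun ψ x)‖₊ : ℝ≥0∞) ^ p with hg
  have hcov : ∫⁻ x, g x = ∫⁻ x, ENNReal.ofReal |1 - deriv φ x| * g (ψ x) := by
    have h1 : (Set.univ : Set ℝ) = ψ '' Set.univ := by
      rw [Set.image_univ, hbij.2.range_eq]
    calc ∫⁻ x, g x = ∫⁻ x in ψ '' Set.univ, g x := by
          rw [← h1, Measure.restrict_univ]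
      _ = ∫⁻ x in Set.univ, ENNReal.ofReal |1 - deriv φ x| * g (ψ x) := by
          have := lintegral_image_eq_lintegral_abs_det_fderiv_mul volume MeasurableSet.univ
            (f := ψ) (f' := fun x => ContinuousLinearMap.toSpanSingleton ℝ (1 - deriv φ x))
            (fun x _ => ((hderiv x).hasFDerivAt).hasFDerivWithinAt)
            (hbij.1.injOn) g
          simpa only [ContinuousLinearMap.det_toSpanSingleton] using this
      _ = _ := by rw [Measure.restrict_univ]
  have hle : ∫⁻ x, g x ≤ ENNReal.ofReal (1 + s) *
      ∫⁻ x, (‖F (ψ x) - G x‖₊ : ℝ≥0∞) ^ p := by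
    rw [hcov, ← lintegral_const_mul' _ _ ENNReal.ofReal_ne_top]
    apply lintegral_mono
    intro x
    simp only [hg, hli x]
    apply mul_le_mul_left
    apply ENNReal.ofReal_le_ofReal
    have := abs_le.1 (hbound x)
    rw [abs_le]; constructor <;> linarith [(abs_le.1 (hbound x)).1, (abs_le.1 (hbound x)).2]
  -- conclude via eLpNorm
  have hpne0 : ENNReal.ofReal p ≠ 0 := by
    simp [ENNReal.ofReal_eq_zero, not_le, hp0]
  have hto : (ENNReal.ofReal p).toReal = p := ENNReal.toReal_ofReal hp0.le
  rw [eLpNorm_eq_eLpNorm' hpne0 ENNReal.ofReal_ne_top,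
      eLpNorm_eq_eLpNorm' hpne0 ENNReal.ofReal_ne_top, hto]
  simp only [eLpNorm']
  calc (∫⁻ x, (‖F x - G (Function.invFun ψ x)‖₊ : ℝ≥0∞) ^ p) ^ (1 / p)
      ≤ (ENNReal.ofReal (1 + s) * ∫⁻ x, (‖F (ψ x) - G x‖₊ : ℝ≥0∞) ^ p) ^ (1 / p) := by
        exact ENNReal.rpow_le_rpow hle (by positivity)
    _ = ENNReal.ofReal ((1 + s) ^ (1 / p)) *
        (∫⁻ x, (‖F (ψ x) - G x‖₊ : ℝ≥0∞) ^ p) ^ (1 / p) := by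
        rw [ENNReal.mul_rpow_of_nonneg _ _ (by positivity),
          ENNReal.ofReal_rpow_of_pos (by linarith)]
end

section
/- Let n ≥ 1 and let φ: ℝ → ℝ be a bounded continuously differentiable function with s := sup_{x∈ℝ}|φ'(x)| < 1, and let φ̃: ℝ → ℝ be the function determined by (Id−φ)⁻¹ = Id + φ̃. Let F: ℝ → ℝⁿ be Borel measurable and let G: ℝ → ℝⁿ be differentiable with bounded derivative. Then for every real p ∈ [1, ∞): ‖F − G∘(Id+φ)‖_{L^p(ℝ)} ≤ (1 + s)^{1/p} ‖F∘(Id−φ) − G‖_{L^p(ℝ)} + ‖G'‖_∞ (1 + s)^{1/p} ‖φ‖_∞ ‖φ'‖_{L^p(ℝ)}. -/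
open MeasureTheory ENNReal

lemma cov_lintegral (φ : ℝ → ℝ) (hd : ∀ x, HasDerivAt φ (deriv φ x) x)
    (hinj : Function.Injective (fun x => x - φ x))
    (hsurj : Function.Surjective (fun x => x - φ x))
    (g : ℝ → ℝ≥0∞) :
    ∫⁻ x, g x = ∫⁻ x, ENNReal.ofReal |1 - deriv φ x| * g (x - φ x) := by
  have h := lintegral_image_eq_lintegral_abs_det_fderiv_mul (volume : Measure ℝ)
    MeasurableSet.univ
    (f := fun x => x - φ x)
    (f' := fun x => (1 : ℝ →L[ℝ] ℝ).smulRight (1 - deriv φ x))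
    (fun x _ => (((hasDerivAt_id x).sub (hd x)).hasFDerivAt).hasFDerivWithinAt)
    (hinj.injOn) g
  simpa [Set.image_univ, hsurj.range_eq, ContinuousLinearMap.smulRight_one_eq_toSpanSingleton, ContinuousLinearMap.det_toSpanSingleton] using h


lemma step4 (φ φt : ℝ → ℝ) (hφ : ContDiff ℝ 1 φ)
    (s : ℝ) (habs : ∀ x, |deriv φ x| ≤ s) (hs1 : s < 1)
    (sφ : ℝ) (hsφ0 : 0 ≤ sφ) (hφb : ∀ x, |φ x| ≤ sφ)
    (hinv1 : ∀ x : ℝ, (x + φt x) - φ (x + φt x) = x)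
    (p : ℝ) (hp : 1 ≤ p) :
    ∫⁻ y : ℝ, (‖φ y - φ (y - φ y)‖₊ : ℝ≥0∞) ^ p ≤
      ENNReal.ofReal sφ ^ p * ∫⁻ u : ℝ, (‖deriv φ u‖₊ : ℝ≥0∞) ^ p := by
  have hdiff : Differentiable ℝ φ := hφ.differentiable one_ne_zero
  have hcont : Continuous (deriv φ) := hφ.continuous_deriv le_rfl
  set ψ : ℝ → ℝ := fun y => y - φ y with hψ
  have hmono : StrictMono ψ := by
    apply strictMono_of_deriv_pos
    intro x
    have : deriv ψ x = 1 - deriv φ x := by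
      exact ((hasDerivAt_id' x).sub (hdiff x).hasDerivAt).deriv
    rw [this]
    have := (abs_le.mp (habs x)).2
    linarith
  have hφt : ∀ u, φt u = φ (u + φt u) := fun u => by have := hinv1 u; linarith
  set g : ℝ → ℝ≥0∞ := fun u => (‖deriv φ u‖₊ : ℝ≥0∞) ^ p with hg
  have hgm : Measurable g := hcont.measurable.enorm.pow_const p
  -- Step 4a
  have h4a : ∀ y : ℝ, (‖φ y - φ (ψ y)‖₊ : ℝ≥0∞) ≤
      ∫⁻ u in Set.uIoc (ψ y) y, (‖deriv φ u‖₊ : ℝ≥0∞) := by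
    intro y
    have hInt : IntervalIntegrable (deriv φ) volume (ψ y) y :=
      hcont.intervalIntegrable _ _
    have heq : ∫ u in (ψ y)..y, deriv φ u = φ y - φ (ψ y) :=
      intervalIntegral.integral_deriv_eq_sub (fun u _ => hdiff u) hInt
    have h1 : |φ y - φ (ψ y)| ≤ ∫ u in Set.uIoc (ψ y) y, |deriv φ u| := by
      rw [← heq, ← Real.norm_eq_abs]
      simpa [Real.norm_eq_abs] using
        (intervalIntegral.norm_integral_le_integral_norm_uIoc (f := deriv φ)
          (a := ψ y) (b := y) (μ := volume))
    have hIntOn : IntegrableOn (fun u => |deriv φ u|) (Set.uIoc (ψ y) y) volume := by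
      apply (hcont.abs.integrableOn_Icc (a := (ψ y) ⊓ y) (b := (ψ y) ⊔ y)).mono_set
      exact Set.Ioc_subset_Icc_self
    calc (‖φ y - φ (ψ y)‖₊ : ℝ≥0∞) = ENNReal.ofReal |φ y - φ (ψ y)| := by
          rw [← enorm_eq_nnnorm, Real.enorm_eq_ofReal_abs]
      _ ≤ ENNReal.ofReal (∫ u in Set.uIoc (ψ y) y, |deriv φ u|) :=
          ENNReal.ofReal_le_ofReal h1
      _ = ∫⁻ u in Set.uIoc (ψ y) y, ENNReal.ofReal |deriv φ u| := by
          rw [ofReal_integral_eq_lintegral_ofReal hIntOn]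
          exact Filter.Eventually.of_forall fun u => abs_nonneg _
      _ = ∫⁻ u in Set.uIoc (ψ y) y, (‖deriv φ u‖₊ : ℝ≥0∞) := by
          simp [← enorm_eq_nnnorm, Real.enorm_eq_ofReal_abs]
  -- volume of the interval
  have hvol : ∀ y : ℝ, volume (Set.uIoc (ψ y) y) ≤ ENNReal.ofReal sφ := by
    intro y
    rw [Set.uIoc, Real.volume_Ioc]
    apply ENNReal.ofReal_le_ofReal
    rw [max_sub_min_eq_abs]
    simpa [hψ] using hφb y
  -- Step 4b : Hölder
  have h4b : ∀ y : ℝ, (‖φ y - φ (ψ y)‖₊ : ℝ≥0∞) ^ p ≤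
      ENNReal.ofReal sφ ^ (p - 1) * ∫⁻ u in Set.uIoc (ψ y) y, g u := by
    intro y
    rcases eq_or_lt_of_le hp with hp1 | hp1
    · simp only [← hp1, sub_self, ENNReal.rpow_one, ENNReal.rpow_zero, one_mul]
      simpa [hg, ← hp1] using h4a y
    · have hpq : p.HolderConjugate (p / (p - 1)) := Real.HolderConjugate.conjExponent hp1
      set q : ℝ := p / (p - 1) with hq
      have hHolder := ENNReal.lintegral_mul_le_Lp_mul_Lq
        (volume.restrict (Set.uIoc (ψ y) y)) hpq
        (f := fun u => (‖deriv φ u‖₊ : ℝ≥0∞)) (g := fun _ => 1)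
        hcont.measurable.enorm.aemeasurable aemeasurable_const
      simp only [mul_one, ENNReal.one_rpow, Pi.mul_apply, Pi.one_apply] at hHolder
      rw [setLIntegral_one] at hHolder
      -- hHolder : ∫⁻ u in T y, ‖deriv φ u‖₊ ≤ (∫⁻ g)^(1/p) * (vol T y)^(1/q)
      have h1 := (h4a y).trans hHolder
      have h2 : ((‖φ y - φ (ψ y)‖₊ : ℝ≥0∞)) ^ p ≤
          ((∫⁻ u in Set.uIoc (ψ y) y, g u) ^ (1/p) *
            (volume (Set.uIoc (ψ y) y)) ^ (1/q)) ^ p :=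
        ENNReal.rpow_le_rpow h1 (le_of_lt hpq.pos)
      rw [ENNReal.mul_rpow_of_nonneg _ _ (le_of_lt hpq.pos),
        ← ENNReal.rpow_mul, ← ENNReal.rpow_mul,
        one_div_mul_cancel hpq.ne_zero, ENNReal.rpow_one] at h2
      have hqp : 1 / q * p = p - 1 := by
        rw [hq]
        field_simp
      rw [hqp] at h2
      refine h2.trans ?_
      rw [mul_comm]
      exact mul_le_mul_left (ENNReal.rpow_le_rpow (hvol y) (by linarith)) _
  -- Step 4c : Fubini
  have h4c : (∫⁻ y : ℝ, ∫⁻ u in Set.uIoc (ψ y) y, g u) ≤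
      ENNReal.ofReal sφ * ∫⁻ u : ℝ, g u := by
    set S : Set (ℝ × ℝ) := {q : ℝ × ℝ | q.2 ∈ Set.uIoc (ψ q.1) q.1} with hS
    have hψm : Measurable ψ := (continuous_id.sub hφ.continuous).measurable
    have hSm : MeasurableSet S := by
      have h1 : MeasurableSet {q : ℝ × ℝ | (ψ q.1) ⊓ q.1 < q.2} :=
        measurableSet_lt ((hψm.comp measurable_fst).min measurable_fst) measurable_snd
      have h2 : MeasurableSet {q : ℝ × ℝ | q.2 ≤ (ψ q.1) ⊔ q.1} :=
        measurableSet_le measurable_snd ((hψm.comp measurable_fst).max measurable_fst)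
      have : S = {q : ℝ × ℝ | (ψ q.1) ⊓ q.1 < q.2} ∩ {q : ℝ × ℝ | q.2 ≤ (ψ q.1) ⊔ q.1} := by
        ext q
        simp [hS, Set.uIoc, Set.mem_Ioc, and_comm]
      rw [this]; exact h1.inter h2
    have hswap : (∫⁻ y : ℝ, ∫⁻ u : ℝ, S.indicator (fun q => g q.2) (y, u)) =
        ∫⁻ u : ℝ, ∫⁻ y : ℝ, S.indicator (fun q => g q.2) (y, u) := by
      apply lintegral_lintegral_swap
      exact ((hgm.comp measurable_snd).indicator hSm).aemeasurable
    have hind : ∀ y u : ℝ, S.indicator (fun q => g q.2) (y, u) =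
        (Set.uIoc (ψ y) y).indicator g u := by
      intro y u
      by_cases h : u ∈ Set.uIoc (ψ y) y <;> simp [Set.indicator, hS, h]
    calc (∫⁻ y : ℝ, ∫⁻ u in Set.uIoc (ψ y) y, g u)
        = ∫⁻ y : ℝ, ∫⁻ u : ℝ, S.indicator (fun q => g q.2) (y, u) := by
          apply lintegral_congr
          intro y
          rw [← lintegral_indicator measurableSet_uIoc]
          exact lintegral_congr fun u => (hind y u).symm
      _ = ∫⁻ u : ℝ, ∫⁻ y : ℝ, S.indicator (fun q => g q.2) (y, u) := hswap
      _ ≤ ∫⁻ u : ℝ, ENNReal.ofReal sφ * g u := by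
          apply lintegral_mono
          intro u
          dsimp only
          have hYm : MeasurableSet {y : ℝ | (y, u) ∈ S} :=
            measurable_prodMk_right hSm
          have : (∫⁻ y : ℝ, S.indicator (fun q => g q.2) (y, u)) =
              g u * volume {y : ℝ | (y, u) ∈ S} := by
            rw [← lintegral_indicator_const hYm (g u)]
            apply lintegral_congr
            intro y
            by_cases hy : (y, u) ∈ S <;> simp [Set.indicator, hy]
          rw [this]
          have hsub : {y : ℝ | (y, u) ∈ S} ⊆ Set.uIcc u (u + φt u) := by
            intro y hy
            have : u ∈ Set.uIcc (ψ y) y := Set.uIoc_subset_uIcc hy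
            rcases Set.mem_uIcc.mp this with ⟨h1, h2⟩ | ⟨h1, h2⟩
            · -- ψ y ≤ u ∧ u ≤ y
              have hu : ψ (u + φt u) = u := hinv1 u
              have hy2 : y ≤ u + φt u := hmono.le_iff_le.mp (by rw [hu]; exact h1)
              exact Set.mem_uIcc.mpr (Or.inl ⟨h2, hy2⟩)
            · have hu : ψ (u + φt u) = u := hinv1 u
              have hy2 : u + φt u ≤ y := hmono.le_iff_le.mp (by rw [hu]; exact h2)
              exact Set.mem_uIcc.mpr (Or.inr ⟨hy2, h1⟩)
          have hvol2 : volume {y : ℝ | (y, u) ∈ S} ≤ ENNReal.ofReal sφ := by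
            refine (measure_mono hsub).trans ?_
            rw [Set.uIcc, Real.volume_Icc]
            apply ENNReal.ofReal_le_ofReal
            have h1 : u ⊔ (u + φt u) - u ⊓ (u + φt u) = |φt u| := by
              rw [max_sub_min_eq_abs, add_sub_cancel_left]
            rw [h1, hφt u]
            exact hφb _
          calc g u * volume {y : ℝ | (y, u) ∈ S} ≤ g u * ENNReal.ofReal sφ :=
                mul_le_mul_right hvol2 _
            _ = ENNReal.ofReal sφ * g u := mul_comm _ _
      _ = ENNReal.ofReal sφ * ∫⁻ u : ℝ, g u := by
          rw [lintegral_const_mul' _ _ ENNReal.ofReal_ne_top]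
  -- combine
  calc (∫⁻ y : ℝ, (‖φ y - φ (y - φ y)‖₊ : ℝ≥0∞) ^ p)
      ≤ ∫⁻ y : ℝ, ENNReal.ofReal sφ ^ (p - 1) * ∫⁻ u in Set.uIoc (ψ y) y, g u :=
        lintegral_mono fun y => h4b y
    _ = ENNReal.ofReal sφ ^ (p - 1) * ∫⁻ y : ℝ, ∫⁻ u in Set.uIoc (ψ y) y, g u :=
        lintegral_const_mul' _ _ (by
          exact ENNReal.rpow_ne_top_of_nonneg (by linarith) ENNReal.ofReal_ne_top)
    _ ≤ ENNReal.ofReal sφ ^ (p - 1) * (ENNReal.ofReal sφ * ∫⁻ u : ℝ, g u) :=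
        mul_le_mul_right h4c _
    _ = ENNReal.ofReal sφ ^ p * ∫⁻ u : ℝ, g u := by
        rw [← mul_assoc]
        congr 1
        calc ENNReal.ofReal sφ ^ (p - 1) * ENNReal.ofReal sφ
            = ENNReal.ofReal sφ ^ (p - 1) * ENNReal.ofReal sφ ^ (1 : ℝ) := by
              rw [ENNReal.rpow_one]
          _ = ENNReal.ofReal sφ ^ (p - 1 + 1) :=
              (ENNReal.rpow_add_of_nonneg _ _ (by linarith) zero_le_one).symm
          _ = ENNReal.ofReal sφ ^ p := by rw [sub_add_cancel]



/-- inverse modulation bound, second part of Lemma `switchlem`.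
With `φ̃` determined by `(Id - φ)⁻¹ = Id + φ̃`, for measurable `F` and differentiable `G`
with bounded derivative:
`‖F - G∘(Id+φ)‖_{L^p} ≤ (1+s)^{1/p} ‖F∘(Id-φ) - G‖_{L^p}
  + ‖G'‖_∞ (1+s)^{1/p} ‖φ‖_∞ ‖φ'‖_{L^p}`. -/
theorem stmt_1 (n : ℕ) (hn : 1 ≤ n) (φ φt : ℝ → ℝ)
    (hφ : ContDiff ℝ 1 φ)
    (s : ℝ) (hs : IsLUB (Set.range fun x => |deriv φ x|) s) (hs1 : s < 1)
    (sφ : ℝ) (hsφ : IsLUB (Set.range fun x => |φ x|) sφ)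
    (hinv1 : ∀ x : ℝ, (x + φt x) - φ (x + φt x) = x)
    (hinv2 : ∀ x : ℝ, (x - φ x) + φt (x - φ x) = x)
    (F : ℝ → EuclideanSpace ℝ (Fin n)) (hF : Measurable F)
    (G : ℝ → EuclideanSpace ℝ (Fin n)) (hG : Differentiable ℝ G)
    (sG : ℝ) (hsG : IsLUB (Set.range fun x => ‖deriv G x‖) sG)
    (p : ℝ) (hp : 1 ≤ p) :
    eLpNorm (fun x => F x - G (x + φ x)) (ENNReal.ofReal p) volume ≤
      ENNReal.ofReal ((1 + s) ^ (1 / p)) *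
        eLpNorm (fun x => F (x - φ x) - G x) (ENNReal.ofReal p) volume +
      ENNReal.ofReal (sG * (1 + s) ^ (1 / p) * sφ) *
        eLpNorm (fun x => deriv φ x) (ENNReal.ofReal p) volume := by
  -- basic facts
  have hdiff : Differentiable ℝ φ := hφ.differentiable one_ne_zero
  have habs : ∀ x, |deriv φ x| ≤ s := fun x => hs.1 ⟨x, rfl⟩
  have hs0 : (0:ℝ) ≤ s := le_trans (abs_nonneg _) (habs 0)
  have hφb : ∀ x, |φ x| ≤ sφ := fun x => hsφ.1 ⟨x, rfl⟩
  have hsφ0 : (0:ℝ) ≤ sφ := le_trans (abs_nonneg _) (hφb 0)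
  have hGb : ∀ x, ‖deriv G x‖ ≤ sG := fun x => hsG.1 ⟨x, rfl⟩
  have hsG0 : (0:ℝ) ≤ sG := le_trans (norm_nonneg _) (hGb 0)
  have hp0 : (0:ℝ) < p := lt_of_lt_of_le zero_lt_one hp
  have hmono : StrictMono (fun y : ℝ => y - φ y) := by
    apply strictMono_of_deriv_pos
    intro x
    have hd : deriv (fun y : ℝ => y - φ y) x = 1 - deriv φ x := by
      exact ((hasDerivAt_id' x).sub (hdiff x).hasDerivAt).deriv
    rw [hd]
    have := (abs_le.mp (habs x)).2
    linarith
  have hsurj : Function.Surjective (fun y : ℝ => y - φ y) := fun x => ⟨x + φt x, hinv1 x⟩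
  have hψm : Measurable (fun y : ℝ => y - φ y) := (continuous_id.sub hφ.continuous).measurable
  -- p as extended real
  have hpe0 : (ENNReal.ofReal p) ≠ 0 := by
    simp only [ne_eq, ENNReal.ofReal_eq_zero, not_le]; linarith
  have hpet : (ENNReal.ofReal p) ≠ ∞ := ENNReal.ofReal_ne_top
  have hpetr : (ENNReal.ofReal p).toReal = p := ENNReal.toReal_ofReal hp0.le
  have h1pe : (1:ℝ≥0∞) ≤ ENNReal.ofReal p := by
    rw [← ENNReal.ofReal_one]; exact ENNReal.ofReal_le_ofReal hp
  have hLp : ∀ f : ℝ → EuclideanSpace ℝ (Fin n),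
      eLpNorm f (ENNReal.ofReal p) volume
        = (∫⁻ x : ℝ, (‖f x‖₊ : ℝ≥0∞) ^ p) ^ (1 / p) := by
    intro f
    rw [eLpNorm_eq_lintegral_rpow_enorm_toReal hpe0 hpet, hpetr]; rfl
  have hLpR : ∀ f : ℝ → ℝ,
      eLpNorm f (ENNReal.ofReal p) volume
        = (∫⁻ x : ℝ, (‖f x‖₊ : ℝ≥0∞) ^ p) ^ (1 / p) := by
    intro f
    rw [eLpNorm_eq_lintegral_rpow_enorm_toReal hpe0 hpet, hpetr]; rfl
  -- Step 1 : change of variables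
  have hcov := cov_lintegral φ (fun x => (hdiff x).hasDerivAt) hmono.injective hsurj
      (fun x => (‖F x - G (x + φ x)‖₊ : ℝ≥0∞) ^ p)
  have hstep1 : (∫⁻ x : ℝ, (‖F x - G (x + φ x)‖₊ : ℝ≥0∞) ^ p) ≤
      ENNReal.ofReal (1 + s) *
        ∫⁻ y : ℝ, (‖F (y - φ y) - G ((y - φ y) + φ (y - φ y))‖₊ : ℝ≥0∞) ^ p := by
    rw [hcov, ← lintegral_const_mul' _ _ (ENNReal.ofReal_ne_top (r := 1 + s))]
    apply lintegral_mono
    intro y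
    apply mul_le_mul_left
    apply ENNReal.ofReal_le_ofReal
    have h1 := (abs_le.mp (habs y)).1
    have h2 := (abs_le.mp (habs y)).2
    rw [abs_le]; constructor <;> linarith
  -- Lipschitz bound for G
  have hGlip : LipschitzWith sG.toNNReal G := by
    apply lipschitzWith_of_nnnorm_deriv_le hG
    intro x
    have : (‖deriv G x‖₊ : ℝ) ≤ ((sG.toNNReal : ℝ)) := by
      rw [coe_nnnorm, Real.coe_toNNReal _ hsG0]; exact hGb x
    exact_mod_cast this
  have hGdiff : ∀ a b : ℝ, ‖G a - G b‖ ≤ sG * |a - b| := by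
    intro a b
    have := hGlip.dist_le_mul a b
    rwa [dist_eq_norm, Real.dist_eq, Real.coe_toNNReal _ hsG0] at this
  -- step 3 pointwise
  have hB2pt : ∀ y : ℝ, (‖G y - G ((y - φ y) + φ (y - φ y))‖₊ : ℝ≥0∞) ≤
      ENNReal.ofReal sG * (‖φ y - φ (y - φ y)‖₊ : ℝ≥0∞) := by
    intro y
    rw [← enorm_eq_nnnorm, ← enorm_eq_nnnorm, ← ofReal_norm, Real.enorm_eq_ofReal_abs, ← ENNReal.ofReal_mul hsG0]
    apply ENNReal.ofReal_le_ofReal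
    have := hGdiff y ((y - φ y) + φ (y - φ y))
    have harg : |y - ((y - φ y) + φ (y - φ y))| = |φ y - φ (y - φ y)| := by
      congr 1; ring
    rw [harg] at this
    exact this
  -- step 4 applied
  have h4 := step4 φ φt hφ s habs hs1 sφ hsφ0 hφb hinv1 p hp
  -- eLpNorm of B2
  have hB2 : eLpNorm (fun y : ℝ => G y - G ((y - φ y) + φ (y - φ y)))
      (ENNReal.ofReal p) volume ≤
      ENNReal.ofReal sG * ENNReal.ofReal sφ *
        (∫⁻ u : ℝ, (‖deriv φ u‖₊ : ℝ≥0∞) ^ p) ^ (1 / p) := by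
    rw [hLp]
    have hmono2 : (∫⁻ y : ℝ, (‖G y - G ((y - φ y) + φ (y - φ y))‖₊ : ℝ≥0∞) ^ p) ≤
        ENNReal.ofReal sG ^ p * ENNReal.ofReal sφ ^ p *
          ∫⁻ u : ℝ, (‖deriv φ u‖₊ : ℝ≥0∞) ^ p := by
      calc (∫⁻ y : ℝ, (‖G y - G ((y - φ y) + φ (y - φ y))‖₊ : ℝ≥0∞) ^ p)
          ≤ ∫⁻ y : ℝ, ENNReal.ofReal sG ^ p * (‖φ y - φ (y - φ y)‖₊ : ℝ≥0∞) ^ p := by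
            apply lintegral_mono
            intro y
            dsimp only
            rw [← ENNReal.mul_rpow_of_nonneg _ _ hp0.le]
            exact ENNReal.rpow_le_rpow (hB2pt y) hp0.le
        _ = ENNReal.ofReal sG ^ p * ∫⁻ y : ℝ, (‖φ y - φ (y - φ y)‖₊ : ℝ≥0∞) ^ p :=
            lintegral_const_mul' _ _ (ENNReal.rpow_ne_top_of_nonneg hp0.le ENNReal.ofReal_ne_top)
        _ ≤ ENNReal.ofReal sG ^ p *
              (ENNReal.ofReal sφ ^ p * ∫⁻ u : ℝ, (‖deriv φ u‖₊ : ℝ≥0∞) ^ p) :=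
            mul_le_mul_right h4 _
        _ = ENNReal.ofReal sG ^ p * ENNReal.ofReal sφ ^ p *
              ∫⁻ u : ℝ, (‖deriv φ u‖₊ : ℝ≥0∞) ^ p := by rw [mul_assoc]
    calc (∫⁻ y : ℝ, (‖G y - G ((y - φ y) + φ (y - φ y))‖₊ : ℝ≥0∞) ^ p) ^ (1 / p)
        ≤ (ENNReal.ofReal sG ^ p * ENNReal.ofReal sφ ^ p *
            ∫⁻ u : ℝ, (‖deriv φ u‖₊ : ℝ≥0∞) ^ p) ^ (1 / p) :=
          ENNReal.rpow_le_rpow hmono2 (by positivity)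
      _ = ENNReal.ofReal sG * ENNReal.ofReal sφ *
            (∫⁻ u : ℝ, (‖deriv φ u‖₊ : ℝ≥0∞) ^ p) ^ (1 / p) := by
          rw [ENNReal.mul_rpow_of_nonneg _ _ (by positivity : (0:ℝ) ≤ 1/p),
            ENNReal.mul_rpow_of_nonneg _ _ (by positivity : (0:ℝ) ≤ 1/p),
            ← ENNReal.rpow_mul, ← ENNReal.rpow_mul,
            mul_one_div_cancel hp0.ne', ENNReal.rpow_one, ENNReal.rpow_one]
  -- triangle inequality
  have htri : eLpNorm (fun y : ℝ => F (y - φ y) - G ((y - φ y) + φ (y - φ y)))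
      (ENNReal.ofReal p) volume ≤
      eLpNorm (fun y : ℝ => F (y - φ y) - G y) (ENNReal.ofReal p) volume +
      eLpNorm (fun y : ℝ => G y - G ((y - φ y) + φ (y - φ y))) (ENNReal.ofReal p) volume := by
    have hsplit : (fun y : ℝ => F (y - φ y) - G ((y - φ y) + φ (y - φ y))) =
        (fun y : ℝ => F (y - φ y) - G y) +
          fun y : ℝ => G y - G ((y - φ y) + φ (y - φ y)) := by
      funext y
      simp [sub_add_sub_cancel]
    rw [hsplit]
    have hm1 : AEStronglyMeasurable (fun y : ℝ => F (y - φ y) - G y) volume :=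
      ((hF.comp hψm).sub hG.continuous.measurable).aestronglyMeasurable
    have hm2 : AEStronglyMeasurable
        (fun y : ℝ => G y - G ((y - φ y) + φ (y - φ y))) volume := by
      apply Measurable.aestronglyMeasurable
      apply hG.continuous.measurable.sub
      exact hG.continuous.measurable.comp
        ((continuous_id.sub hφ.continuous).add
          (hφ.continuous.comp (continuous_id.sub hφ.continuous))).measurable
    exact eLpNorm_add_le hm1 hm2 h1pe
  -- assemble
  rw [hLp, hLpR]
  calc (∫⁻ x : ℝ, (‖F x - G (x + φ x)‖₊ : ℝ≥0∞) ^ p) ^ (1 / p)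
      ≤ (ENNReal.ofReal (1 + s) *
          ∫⁻ y : ℝ, (‖F (y - φ y) - G ((y - φ y) + φ (y - φ y))‖₊ : ℝ≥0∞) ^ p) ^ (1 / p) :=
        ENNReal.rpow_le_rpow hstep1 (by positivity)
    _ = ENNReal.ofReal ((1 + s) ^ (1 / p)) *
          eLpNorm (fun y : ℝ => F (y - φ y) - G ((y - φ y) + φ (y - φ y)))
            (ENNReal.ofReal p) volume := by
        rw [ENNReal.mul_rpow_of_nonneg _ _ (by positivity : (0:ℝ) ≤ 1/p),
          ENNReal.ofReal_rpow_of_pos (by linarith), hLp]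
    _ ≤ ENNReal.ofReal ((1 + s) ^ (1 / p)) *
          (eLpNorm (fun y : ℝ => F (y - φ y) - G y) (ENNReal.ofReal p) volume +
           eLpNorm (fun y : ℝ => G y - G ((y - φ y) + φ (y - φ y)))
             (ENNReal.ofReal p) volume) := mul_le_mul_right htri _
    _ ≤ ENNReal.ofReal ((1 + s) ^ (1 / p)) *
          (eLpNorm (fun y : ℝ => F (y - φ y) - G y) (ENNReal.ofReal p) volume +
           ENNReal.ofReal sG * ENNReal.ofReal sφ *
             (∫⁻ u : ℝ, (‖deriv φ u‖₊ : ℝ≥0∞) ^ p) ^ (1 / p)) := by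
        apply mul_le_mul_right
        exact add_le_add_right hB2 _
    _ = ENNReal.ofReal ((1 + s) ^ (1 / p)) *
          eLpNorm (fun y : ℝ => F (y - φ y) - G y) (ENNReal.ofReal p) volume +
        ENNReal.ofReal (sG * (1 + s) ^ (1 / p) * sφ) *
          (∫⁻ u : ℝ, (‖deriv φ u‖₊ : ℝ≥0∞) ^ p) ^ (1 / p) := by
        rw [mul_add]
        congr 1
        rw [ENNReal.ofReal_mul (by positivity), ENNReal.ofReal_mul hsG0]
        ring
end

section
/- Let φ: ℝ → ℝ be a bounded continuously differentiable function with s := sup_{x∈ℝ}|φ'(x)| < 1, and let φ̃: ℝ → ℝ be the function determined by (Id−φ)⁻¹ = Id + φ̃ (equivalently, φ̃ = φ∘(Id+φ̃)). Then ‖φ̃‖_∞ ≤ ‖φ‖_∞, and for every real p ∈ [1, ∞): ‖φ̃ − φ‖_{L^p(ℝ)} ≤ ‖φ‖_∞ (1 + s)^{1/p} ‖φ'‖_{L^p(ℝ)}. -/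
open MeasureTheory
open scoped ENNReal NNReal

/-- bounds on the inverse phase `φ̃`, from the proof of Lemma `switchlem`.
With `φ̃` determined by `(Id - φ)⁻¹ = Id + φ̃`: `‖φ̃‖_∞ ≤ ‖φ‖_∞` and, for `1 ≤ p < ∞`,
`‖φ̃ - φ‖_{L^p} ≤ ‖φ‖_∞ (1+s)^{1/p} ‖φ'‖_{L^p}`. -/
theorem stmt_2 (φ φt : ℝ → ℝ)
    (hφ : ContDiff ℝ 1 φ)
    (s : ℝ) (hs : IsLUB (Set.range fun x => |deriv φ x|) s) (hs1 : s < 1)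
    (sφ : ℝ) (hsφ : IsLUB (Set.range fun x => |φ x|) sφ)
    (hinv1 : ∀ x : ℝ, (x + φt x) - φ (x + φt x) = x)
    (hinv2 : ∀ x : ℝ, (x - φ x) + φt (x - φ x) = x) :
    (∀ x, |φt x| ≤ sφ) ∧
      ∀ p : ℝ, 1 ≤ p →
        eLpNorm (fun x => φt x - φ x) (ENNReal.ofReal p) volume ≤
          ENNReal.ofReal (sφ * (1 + s) ^ (1 / p)) *
            eLpNorm (fun x => deriv φ x) (ENNReal.ofReal p) volume := by
  have hφ'le : ∀ x, |deriv φ x| ≤ s := fun x => hs.1 ⟨x, rfl⟩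
  have hφle : ∀ x, |φ x| ≤ sφ := fun x => hsφ.1 ⟨x, rfl⟩
  have hs0 : 0 ≤ s := (abs_nonneg _).trans (hφ'le 0)
  have hsφ0 : 0 ≤ sφ := (abs_nonneg _).trans (hφle 0)
  have hdiff : Differentiable ℝ φ := hφ.differentiable one_ne_zero
  have hcd : Continuous (deriv φ) := hφ.continuous_deriv le_rfl
  have hφt_eq : ∀ x, φt x = φ (x + φt x) := fun x => by linarith [hinv1 x]
  have part1 : ∀ x, |φt x| ≤ sφ := fun x => by rw [hφt_eq x]; exact hφle _
  refine ⟨part1, fun p hp => ?_⟩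
  -- Lipschitz bound for φ, strict monotonicity of `Id - φ`
  have hlip : LipschitzWith (NNReal.mk s hs0) φ :=
    lipschitzWith_of_nnnorm_deriv_le hdiff (fun x => by
      simp only [← NNReal.coe_le_coe, coe_nnnorm, Real.norm_eq_abs]; exact hφ'le x)
  have hlip' : ∀ a b : ℝ, |φ b - φ a| ≤ s * |b - a| := fun a b => by
    have := hlip.dist_le_mul b a
    simpa [Real.dist_eq] using this
  have hg : StrictMono (fun x : ℝ => x - φ x) := by
    intro a b hab
    have h1 := hlip' a b
    rw [abs_of_pos (by linarith : (0:ℝ) < b - a)] at h1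
    have h2 := abs_le.mp h1
    simp only
    nlinarith [h2.1, h2.2]
  have hh : Monotone (fun x : ℝ => x + φt x) := by
    intro a b hab
    by_contra hc
    push_neg at hc
    have h3 := hg hc
    simp only [hinv1 a, hinv1 b] at h3
    exact absurd h3 (not_lt.mpr hab)
  have hmt : Measurable φt := by
    have h4 : Measurable fun x : ℝ => (x + φt x) - x := hh.measurable.sub measurable_id
    simpa using h4
  have hFTC : ∀ x, φt x - φ x = ∫ t in x..(x + φt x), deriv φ t := by
    intro x
    rw [intervalIntegral.integral_deriv_eq_sub (fun t _ => hdiff t)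
      (hcd.intervalIntegrable _ _), ← hφt_eq x]
  -- degenerate case sφ = 0
  rcases eq_or_lt_of_le hsφ0 with hzero | hsφpos
  · have hz : (fun x => φt x - φ x) = (fun _ : ℝ => (0:ℝ)) := by
      funext x
      have h1 : φ x = 0 := abs_eq_zero.mp (le_antisymm (hzero ▸ hφle x) (abs_nonneg _))
      have h2 : φt x = 0 := abs_eq_zero.mp (le_antisymm (hzero ▸ part1 x) (abs_nonneg _))
      rw [h1, h2, sub_zero]
    rw [hz, eLpNorm_zero']
    exact zero_le
  -- main case
  have hp0 : (0:ℝ) < p := lt_of_lt_of_le one_pos hp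
  set q : ℝ≥0∞ := ENNReal.ofReal p with hqdef
  have hq1 : 1 ≤ q := by
    rw [hqdef, ← ENNReal.ofReal_one]; exact ENNReal.ofReal_le_ofReal hp
  have hq0 : q ≠ 0 := (ENNReal.ofReal_pos.mpr hp0).ne'
  have hqtop : q ≠ ∞ := ENNReal.ofReal_ne_top
  have hqr : q.toReal = p := ENNReal.toReal_ofReal hp0.le
  -- pointwise Hölder estimate
  have key1 : ∀ x : ℝ, (‖φt x - φ x‖₊ : ℝ≥0∞) ^ p ≤
      ENNReal.ofReal sφ ^ (p - 1) *
        ∫⁻ t in Set.uIoc x (x + φt x), (‖deriv φ t‖₊ : ℝ≥0∞) ^ p := by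
    intro x
    have h1 : (‖φt x - φ x‖₊ : ℝ≥0∞) ≤ ∫⁻ t in Set.uIoc x (x + φt x), ‖deriv φ t‖₊ := by
      rw [hFTC x, intervalIntegral.intervalIntegral_eq_integral_uIoc]
      rcases le_or_gt x (x + φt x) with hle | hlt
      · rw [if_pos hle, one_smul]
        exact enorm_integral_le_lintegral_enorm _
      · rw [if_neg (not_le.mpr hlt), neg_one_smul, nnnorm_neg]
        exact enorm_integral_le_lintegral_enorm _
    have hvol : volume (Set.uIoc x (x + φt x)) ≤ ENNReal.ofReal sφ := by
      rw [Set.uIoc, Real.volume_Ioc]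
      refine ENNReal.ofReal_le_ofReal ?_
      rw [max_sub_min_eq_abs, add_sub_cancel_left]
      exact part1 x
    have h2 : (∫⁻ t in Set.uIoc x (x + φt x), (‖deriv φ t‖₊ : ℝ≥0∞)) ≤
        (∫⁻ t in Set.uIoc x (x + φt x), (‖deriv φ t‖₊ : ℝ≥0∞) ^ p) ^ (1/p) *
          ENNReal.ofReal sφ ^ (1 - 1/p) := by
      have hH := eLpNorm_le_eLpNorm_mul_rpow_measure_univ (p := 1) (q := q)
        (μ := volume.restrict (Set.uIoc x (x + φt x))) (f := deriv φ) hq1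
        hcd.aestronglyMeasurable
      rw [eLpNorm_one_eq_lintegral_enorm, eLpNorm_eq_lintegral_rpow_enorm_toReal hq0 hqtop, hqr,
        Measure.restrict_apply MeasurableSet.univ, Set.univ_inter, ENNReal.toReal_one] at hH
      refine hH.trans ?_
      rw [show (1:ℝ)/1 - 1/p = 1 - 1/p by norm_num]
      gcongr
      · exact le_rfl
      rw [sub_nonneg]
      exact div_le_one_of_le₀ hp (by linarith)
    calc (‖φt x - φ x‖₊ : ℝ≥0∞) ^ p
        ≤ ((∫⁻ t in Set.uIoc x (x + φt x), (‖deriv φ t‖₊ : ℝ≥0∞) ^ p) ^ (1/p) *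
          ENNReal.ofReal sφ ^ (1 - 1/p)) ^ p := ENNReal.rpow_le_rpow (h1.trans h2) hp0.le
      _ = ENNReal.ofReal sφ ^ (p - 1) *
          ∫⁻ t in Set.uIoc x (x + φt x), (‖deriv φ t‖₊ : ℝ≥0∞) ^ p := by
          rw [ENNReal.mul_rpow_of_nonneg _ _ hp0.le, ← ENNReal.rpow_mul, ← ENNReal.rpow_mul,
            one_div_mul_cancel hp0.ne', ENNReal.rpow_one]
          rw [show (1 - 1/p) * p = p - 1 by field_simp]
          ring
  -- Fubini
  set G : ℝ → ℝ≥0∞ := fun t => (‖deriv φ t‖₊ : ℝ≥0∞) ^ p with hG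
  set S : Set (ℝ × ℝ) := {q : ℝ × ℝ | q.2 ∈ Set.uIoc q.1 (q.1 + φt q.1)} with hSdef
  have hGm : Measurable G := ENNReal.continuous_rpow_const.measurable.comp hcd.measurable.enorm
  have hhm : Measurable fun x : ℝ => x + φt x := measurable_id.add hmt
  have hSm : MeasurableSet S := by
    have h1 : Measurable fun q : ℝ × ℝ => q.1 + φt q.1 := hhm.comp measurable_fst
    exact (measurableSet_lt (measurable_fst.min h1) measurable_snd).inter
      (measurableSet_le measurable_snd (measurable_fst.max h1))
  have hslice : ∀ t : ℝ, MeasurableSet {x : ℝ | t ∈ Set.uIoc x (x + φt x)} := fun t =>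
    (measurableSet_lt (measurable_id.min hhm) measurable_const).inter
      (measurableSet_le measurable_const (measurable_id.max hhm))
  have hswap : ∫⁻ x : ℝ, ∫⁻ t in Set.uIoc x (x + φt x), G t =
      ∫⁻ t : ℝ, G t * volume {x | t ∈ Set.uIoc x (x + φt x)} := by
    calc ∫⁻ x : ℝ, ∫⁻ t in Set.uIoc x (x + φt x), G t
        = ∫⁻ x : ℝ, ∫⁻ t : ℝ, S.indicator (fun q => G q.2) (x, t) := by
          refine lintegral_congr fun x => ?_
          rw [← lintegral_indicator measurableSet_uIoc]
          refine lintegral_congr fun t => ?_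
          by_cases h : t ∈ Set.uIoc x (x + φt x)
          · rw [Set.indicator_of_mem h]
            exact (Set.indicator_of_mem (show (x, t) ∈ S from h) (fun q => G q.2)).symm
          · rw [Set.indicator_of_notMem h]
            exact (Set.indicator_of_notMem (show (x, t) ∉ S from h) (fun q => G q.2)).symm
      _ = ∫⁻ t : ℝ, ∫⁻ x : ℝ, S.indicator (fun q => G q.2) (x, t) := by
          exact lintegral_lintegral_swap
            (f := fun x t => S.indicator (fun q => G q.2) (x, t))
            ((hGm.comp measurable_snd).indicator hSm).aemeasurable
      _ = ∫⁻ t : ℝ, G t * volume {x | t ∈ Set.uIoc x (x + φt x)} := by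
          refine lintegral_congr fun t => ?_
          have hind : ∀ x : ℝ, S.indicator (fun q => G q.2) (x, t) =
              ({x : ℝ | t ∈ Set.uIoc x (x + φt x)}.indicator (fun _ => G t)) x := fun x => by
            by_cases h : t ∈ Set.uIoc x (x + φt x)
            · rw [Set.indicator_of_mem (show (x, t) ∈ S from h),
                Set.indicator_of_mem (show x ∈ {x : ℝ | t ∈ Set.uIoc x (x + φt x)} from h)]
            · rw [Set.indicator_of_notMem (show (x, t) ∉ S from h),
                Set.indicator_of_notMem (show x ∉ {x : ℝ | t ∈ Set.uIoc x (x + φt x)} from h)]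
          simp_rw [hind]
          rw [lintegral_indicator_const (hslice t)]
  -- measure bound for the slices
  have hmeasbd : ∀ t : ℝ, volume {x : ℝ | t ∈ Set.uIoc x (x + φt x)} ≤ ENNReal.ofReal sφ := by
    intro t
    have hsub : {x : ℝ | t ∈ Set.uIoc x (x + φt x)} ⊆ Set.uIcc (t - φ t) t := by
      intro x hx
      rw [Set.mem_setOf_eq, Set.uIoc, Set.mem_Ioc] at hx
      obtain ⟨hx1, hx2⟩ := hx
      rcases le_total x (x + φt x) with hle | hle
      · rw [inf_eq_left.mpr hle] at hx1
        rw [sup_eq_right.mpr hle] at hx2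
        have h5 : t - φ t ≤ x := by
          have h6 := hg.monotone hx2
          simpa [hinv1 x] using h6
        exact Set.mem_uIcc.mpr (Or.inl ⟨h5, hx1.le⟩)
      · rw [inf_eq_right.mpr hle] at hx1
        rw [sup_eq_left.mpr hle] at hx2
        have h5 : x ≤ t - φ t := by
          have h6 := hg.monotone hx1.le
          simpa [hinv1 x] using h6
        exact Set.mem_uIcc.mpr (Or.inr ⟨hx2, h5⟩)
    calc volume {x : ℝ | t ∈ Set.uIoc x (x + φt x)}
        ≤ volume (Set.uIcc (t - φ t) t) := measure_mono hsub
      _ ≤ ENNReal.ofReal sφ := by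
          rw [Set.uIcc, Real.volume_Icc]
          refine ENNReal.ofReal_le_ofReal ?_
          rw [max_sub_min_eq_abs, sub_sub_cancel]
          exact hφle t
  -- put the pieces together
  have hC0 : ENNReal.ofReal sφ ≠ 0 := (ENNReal.ofReal_pos.mpr hsφpos).ne'
  have hCtop : ENNReal.ofReal sφ ≠ ∞ := ENNReal.ofReal_ne_top
  have hCC : ENNReal.ofReal sφ ^ (p - 1) * ENNReal.ofReal sφ = ENNReal.ofReal sφ ^ p := by
    calc ENNReal.ofReal sφ ^ (p - 1) * ENNReal.ofReal sφ
        = ENNReal.ofReal sφ ^ (p - 1) * ENNReal.ofReal sφ ^ (1:ℝ) := by rw [ENNReal.rpow_one]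
      _ = ENNReal.ofReal sφ ^ (p - 1 + 1) := (ENNReal.rpow_add _ _ hC0 hCtop).symm
      _ = ENNReal.ofReal sφ ^ p := by ring_nf
  have main : ∫⁻ x : ℝ, (‖φt x - φ x‖₊ : ℝ≥0∞) ^ p ≤
      ENNReal.ofReal sφ ^ p * ∫⁻ t : ℝ, G t := by
    calc ∫⁻ x : ℝ, (‖φt x - φ x‖₊ : ℝ≥0∞) ^ p
        ≤ ∫⁻ x : ℝ, ENNReal.ofReal sφ ^ (p - 1) *
            ∫⁻ t in Set.uIoc x (x + φt x), G t := lintegral_mono key1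
      _ = ENNReal.ofReal sφ ^ (p - 1) * ∫⁻ x : ℝ, ∫⁻ t in Set.uIoc x (x + φt x), G t :=
          lintegral_const_mul' _ _ (ENNReal.rpow_ne_top_of_nonneg (by linarith) hCtop)
      _ = ENNReal.ofReal sφ ^ (p - 1) *
            ∫⁻ t : ℝ, G t * volume {x | t ∈ Set.uIoc x (x + φt x)} := by rw [hswap]
      _ ≤ ENNReal.ofReal sφ ^ (p - 1) * ∫⁻ t : ℝ, G t * ENNReal.ofReal sφ := by
          gcongr with t
          exact hmeasbd t
      _ = ENNReal.ofReal sφ ^ p * ∫⁻ t : ℝ, G t := by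
          rw [lintegral_mul_const' _ _ hCtop, ← hCC]
          ring
  rw [eLpNorm_eq_lintegral_rpow_enorm_toReal hq0 hqtop, eLpNorm_eq_lintegral_rpow_enorm_toReal hq0 hqtop, hqr]
  calc (∫⁻ x : ℝ, (‖φt x - φ x‖₊ : ℝ≥0∞) ^ p) ^ (1/p)
      ≤ (ENNReal.ofReal sφ ^ p * ∫⁻ t : ℝ, G t) ^ (1/p) :=
        ENNReal.rpow_le_rpow main (by positivity)
    _ = ENNReal.ofReal sφ * (∫⁻ t : ℝ, G t) ^ (1/p) := by
        rw [ENNReal.mul_rpow_of_nonneg _ _ (by positivity), ← ENNReal.rpow_mul,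
          mul_one_div_cancel hp0.ne', ENNReal.rpow_one]
    _ ≤ ENNReal.ofReal (sφ * (1 + s) ^ (1/p)) * (∫⁻ t : ℝ, G t) ^ (1/p) := by
        gcongr
        nlinarith [Real.one_le_rpow (by linarith : (1:ℝ) ≤ 1 + s)
          (by positivity : (0:ℝ) ≤ 1/p), hsφ0]
end

section
/- Let g: ℝ → ℂ be a Schwartz function. Then ∫_ℝ |g(x)|² dx = 2π ∫_{−π}^{π} ∫_0^1 |ǧ(ξ, x)|² dx dξ, where ǧ is the Bloch transform of g. -/
open MeasureTheory

/-- The Fourier transform with the paper's normalization: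
`ĝ(z) = (1/(2π)) ∫_ℝ e^{-iωz} g(ω) dω`. -/
noncomputable def fourierT (g : ℝ → ℂ) (z : ℝ) : ℂ :=
  (1 / (2 * Real.pi)) * ∫ ω : ℝ, Complex.exp (-(Complex.I * ω * z)) * g ω

/-- The Bloch transform: `ǧ(ξ,x) = Σ_{k∈ℤ} e^{2πikx} ĝ(ξ + 2πk)`. -/
noncomputable def blochT (g : ℝ → ℂ) (ξ x : ℝ) : ℂ :=
  ∑' k : ℤ, Complex.exp (2 * Real.pi * Complex.I * k * x) * fourierT g (ξ + 2 * Real.pi * k)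

open Real ComplexConjugate


lemma fourierT_eq (g : ℝ → ℂ) (z : ℝ) :
    fourierT g z = ((1 / (2 * Real.pi) : ℝ) : ℂ) * FourierTransform.fourier g (z / (2 * Real.pi)) := by
  rw [fourierT, Real.fourier_eq']
  congr 1
  · push_cast; ring
  refine integral_congr_ae (Filter.Eventually.of_forall fun ω => ?_)
  dsimp only
  rw [smul_eq_mul]
  congr 2
  simp only [RCLike.inner_apply, conj_trivial]
  rw [show (-2 * Real.pi * (z / (2 * Real.pi) * ω)) = -(ω * z) by field_simp]
  push_cast
  ring

lemma summable_schwartz_translate (φ : SchwartzMap ℝ ℂ) (a : ℝ) :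
    Summable (fun k : ℤ => φ (a + k)) := by
  obtain ⟨C, hC0, hC⟩ := φ.decay 2 0
  apply Summable.of_norm_bounded_eventually (g := fun k : ℤ => (4*C) * (1 / (k:ℝ)^2))
  · exact (summable_one_div_int_pow.mpr one_lt_two).mul_left _
  · rw [Filter.eventually_cofinite]
    refine Set.Finite.subset (Set.finite_Icc (-⌈2*|a|+1⌉) ⌈2*|a|+1⌉) ?_
    intro k hk
    simp only [Set.mem_setOf_eq, not_le] at hk
    by_contra hk2
    apply absurd hk; push_neg
    simp only [Set.mem_Icc, not_and_or, not_le] at hk2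
    have hceil : (2*|a|+1 : ℝ) ≤ ⌈2*|a|+1⌉ := Int.le_ceil _
    have ha0 := abs_nonneg a
    have hk3 : (2*|a|+1) ≤ |(k:ℝ)| := by
      rcases hk2 with h | h
      · have h' : (k:ℝ) ≤ -(⌈2*|a|+1⌉:ℝ) - 1 := by exact_mod_cast Int.le_of_lt_add_one (by omega)
        have hle : (k:ℝ) ≤ -(2*|a|+1) := by linarith
        rw [abs_of_nonpos (show (k:ℝ) ≤ 0 by linarith)]; linarith
      · have h' : (⌈2*|a|+1⌉ : ℝ) ≤ (k:ℝ) := by exact_mod_cast h.le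
        rw [abs_of_nonneg (show (0:ℝ) ≤ (k:ℝ) by linarith)]; linarith
    have habs : |(k:ℝ)| / 2 ≤ |a + k| := by
      have h3 := abs_add_le (a + (k:ℝ)) (-a)
      have he : a + (k:ℝ) + -a = (k:ℝ) := by ring
      rw [he, abs_neg] at h3
      linarith
    have hsq : ((k:ℝ)^2/4) * ‖φ (a+k)‖ ≤ C := by
      calc ((k:ℝ)^2/4) * ‖φ (a+k)‖ = (|(k:ℝ)|/2)^2 * ‖φ (a+k)‖ := by
            rw [div_pow, _root_.sq_abs]; norm_num
      _ ≤ ‖a + (k:ℝ)‖^2 * ‖φ (a+k)‖ := by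
          apply mul_le_mul_of_nonneg_right _ (norm_nonneg _)
          apply pow_le_pow_left₀ (by positivity) (by rwa [Real.norm_eq_abs])
      _ ≤ ‖(a + (k:ℝ))‖ ^ 2 * ‖iteratedFDeriv ℝ 0 (⇑φ) (a+k)‖ := by
          rw [norm_iteratedFDeriv_zero]
      _ ≤ C := hC _
    have hk2pos : (0:ℝ) < (k:ℝ)^2 := by
      have h1 : (1:ℝ) ≤ |(k:ℝ)| := by linarith
      have := _root_.sq_abs (k:ℝ)
      nlinarith
    rw [← sub_nonneg]
    have heq : 4 * C * (1/(k:ℝ)^2) - ‖φ (a + k)‖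
        = (C - ((k:ℝ)^2/4) * ‖φ (a+k)‖) * (4/(k:ℝ)^2) := by
      have hk0 : (k:ℝ) ≠ 0 := fun h0 => by simp [h0] at hk2pos
      field_simp
    rw [heq]
    apply mul_nonneg (by linarith) (by positivity)

lemma plancherel_schwartz (g : SchwartzMap ℝ ℂ) :
    ∫ ξ : ℝ, ‖FourierTransform.fourier (⇑g) ξ‖^2 = ∫ x : ℝ, ‖g x‖^2 := by
  set f : ℝ → ℂ := ⇑g with hfdef
  set F : ℝ → ℂ := FourierTransform.fourier f with hFdef
  have hf : Integrable f := g.integrable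
  have hFg : Integrable F := by
    have := (SchwartzMap.fourierTransformCLE ℝ (SchwartzMap ℝ ℂ) g).integrable (μ := volume)
    exact this
  have hconj : Integrable (fun ξ => conj (F ξ)) := by
    refine Integrable.mono' hFg.norm ?_ (Filter.Eventually.of_forall fun ξ => ?_)
    · exact RCLike.continuous_conj.comp_aestronglyMeasurable hFg.1
    · simp
  have hflip : (innerₗ ℝ).flip = innerₗ ℝ := by
    refine LinearMap.ext fun x => LinearMap.ext fun y => ?_
    simpa using mul_comm y x
  have key := VectorFourier.integral_bilin_fourierIntegral_eq_flip
    (E := ℂ) (F := ℂ) (G := ℂ) (ContinuousLinearMap.mul ℂ ℂ) (μ := volume) (ν := volume)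
    (L := innerₗ ℝ) Real.continuous_fourierChar continuous_inner hf hconj
  rw [hflip] at key
  have hFinv : ∀ x, (VectorFourier.fourierIntegral Real.fourierChar volume (innerₗ ℝ)
      (fun ξ => conj (F ξ)) x) = conj (FourierTransformInv.fourierInv F x) := by
    intro x
    have h1 : (VectorFourier.fourierIntegral Real.fourierChar volume (innerₗ ℝ)
        (fun ξ => conj (F ξ)) x) = FourierTransform.fourier (fun ξ => conj (F ξ)) x := rfl
    rw [h1, Real.fourier_eq', Real.fourierInv_eq', ← integral_conj]
    refine integral_congr_ae (Filter.Eventually.of_forall fun v => ?_)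
    dsimp only
    rw [smul_eq_mul, smul_eq_mul, map_mul, ← Complex.exp_conj]
    congr 2
    simp only [map_mul, Complex.conj_ofReal, Complex.conj_I]
    push_cast
    ring
  have hinv : FourierTransformInv.fourierInv F = f := g.continuous.fourierInv_fourier_eq hf hFg
  have key2 : ∫ ξ, F ξ * conj (F ξ) = ∫ x, f x * conj (f x) := by
    have h2 : (VectorFourier.fourierIntegral Real.fourierChar volume (innerₗ ℝ) f) = F := rfl
    rw [show (∫ ξ, F ξ * conj (F ξ)) = ∫ ξ, (ContinuousLinearMap.mul ℂ ℂ)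
      ((VectorFourier.fourierIntegral Real.fourierChar volume (innerₗ ℝ) f) ξ) (conj (F ξ)) by
        rw [h2]; rfl, key]
    refine integral_congr_ae (Filter.Eventually.of_forall fun x => ?_)
    dsimp only
    rw [hFinv x, hinv]
    rfl
  have hsq : ∀ z : ℂ, z * conj z = ((‖z‖^2 : ℝ) : ℂ) := fun z => by
    exact_mod_cast RCLike.mul_conj z
  simp_rw [hsq] at key2
  rw [integral_complex_ofReal, integral_complex_ofReal] at key2
  exact_mod_cast key2

lemma cont_integrable_haar {f : AddCircle (1:ℝ) → ℂ} (hf : Continuous f) :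
    Integrable f AddCircle.haarAddCircle := by
  haveI : Fact (0 < (1:ℝ)) := ⟨one_pos⟩
  exact hf.integrable_of_hasCompactSupport
    (IsCompact.of_isClosed_subset isCompact_univ (isClosed_tsupport f) (Set.subset_univ _))

lemma integral_fourier_haar (m : ℤ) :
    haveI : Fact (0 < (1:ℝ)) := ⟨one_pos⟩
    ∫ t : AddCircle (1:ℝ), fourier m t ∂AddCircle.haarAddCircle
      = if m = 0 then 1 else 0 := by
  haveI : Fact (0 < (1:ℝ)) := ⟨one_pos⟩
  rcases eq_or_ne m 0 with rfl | hm
  · simp only [fourier_zero, if_pos rfl]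
    simp [measure_univ]
  · rw [if_neg hm]
    have h := orthonormal_fourier (T := (1:ℝ))
    have h2 : (inner (𝕜 := ℂ) (fourierLp (T := (1:ℝ)) 2 0) (fourierLp 2 m) : ℂ) = 0 :=
      h.2 (show (0:ℤ) ≠ m from fun hh => hm hh.symm)
    rw [MeasureTheory.L2.inner_def] at h2
    rw [← h2]
    refine integral_congr_ae ?_
    filter_upwards [coeFn_fourierLp (T := (1:ℝ)) 2 0, coeFn_fourierLp (T := (1:ℝ)) 2 m]
      with t h0 hm'
    rw [h0, hm', RCLike.inner_apply, fourier_zero, map_one, mul_one]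

lemma circle_parseval (c : ℤ → ℂ) (hc : Summable c) :
    ∫ x in Set.Icc (0:ℝ) 1, ‖∑' k : ℤ, c k * Complex.exp (2 * Real.pi * Complex.I * k * x)‖^2
      = ∑' k : ℤ, ‖c k‖^2 := by
  haveI : Fact (0 < (1:ℝ)) := ⟨one_pos⟩
  have hcn : Summable fun k : ℤ => ‖c k‖ := summable_norm_iff.mpr hc
  have hfn : ∀ (k : ℤ) (t : AddCircle (1:ℝ)), ‖(fourier k t : ℂ)‖ = 1 := fun k t =>
    Circle.norm_coe _
  have hcont : Continuous (fun t : AddCircle (1:ℝ) => ∑' k : ℤ, c k * fourier k t) := by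
    refine continuous_tsum (fun k => continuous_const.mul (map_continuous _)) hcn ?_
    intro k t; rw [norm_mul, hfn, mul_one]
  set F : C(AddCircle (1:ℝ), ℂ) := ⟨fun t => ∑' k : ℤ, c k * fourier k t, hcont⟩ with hFdef
  have hFapp : ∀ t, F t = ∑' k : ℤ, c k * fourier k t := fun t => rfl
  have hcoeff : ∀ n : ℤ, fourierCoeff (⇑F) n = c n := by
    intro n
    have h1 : ∀ t : AddCircle (1:ℝ), fourier (-n) t • F t
        = ∑' k : ℤ, c k * fourier (k + -n) t := by
      intro t
      rw [smul_eq_mul, hFapp, ← tsum_mul_left]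
      exact tsum_congr fun k => by rw [fourier_add]; ring
    have h2 : fourierCoeff (⇑F) n
        = ∫ t : AddCircle (1:ℝ), (∑' k : ℤ, c k * fourier (k + -n) t) ∂AddCircle.haarAddCircle := by
      rw [fourierCoeff]; exact integral_congr_ae (Filter.Eventually.of_forall h1)
    have hint : ∀ k : ℤ, Integrable (fun t : AddCircle (1:ℝ) => c k * fourier (k + -n) t)
        AddCircle.haarAddCircle := fun k =>
      cont_integrable_haar (continuous_const.mul (map_continuous _))
    have hsum : Summable fun k : ℤ =>
        ∫ t : AddCircle (1:ℝ), ‖c k * fourier (k + -n) t‖ ∂AddCircle.haarAddCircle := by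
      have : (fun k : ℤ => ∫ t : AddCircle (1:ℝ), ‖c k * fourier (k + -n) t‖ ∂AddCircle.haarAddCircle)
          = fun k : ℤ => ‖c k‖ := by
        funext k; simp [norm_mul, hfn, measure_univ, Circle.norm_coe]
      rw [this]; exact hcn
    rw [h2, ← integral_tsum_of_summable_integral_norm hint hsum]
    have hterm : ∀ k : ℤ, (∫ t : AddCircle (1:ℝ), c k * fourier (k + -n) t ∂AddCircle.haarAddCircle)
        = if k = n then c n else 0 := by
      intro k
      rw [MeasureTheory.integral_const_mul, integral_fourier_haar]
      rcases eq_or_ne k n with rfl | hk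
      · simp
      · rw [if_neg (by omega), mul_zero, if_neg hk]
    rw [tsum_congr hterm]
    exact tsum_ite_eq n (fun _ => c n)
  set F2 := ContinuousMap.toLp (E := ℂ) 2 AddCircle.haarAddCircle ℂ F with hF2def
  have hae : ⇑F2 =ᵐ[AddCircle.haarAddCircle] ⇑F := ContinuousMap.coeFn_toLp _ F
  have hpars := tsum_sq_fourierCoeff F2
  have hc2 : ∀ n, fourierCoeff (⇑F2) n = c n := by
    intro n
    rw [← hcoeff n, fourierCoeff, fourierCoeff]
    exact integral_congr_ae (hae.mono fun t ht => by dsimp only; rw [ht])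
  have hrhs : ∑' k : ℤ, ‖fourierCoeff (⇑F2) k‖^2 = ∑' k : ℤ, ‖c k‖^2 :=
    tsum_congr fun k => by rw [hc2]
  have hFx : ∀ x : ℝ, F ((x : ℝ) : AddCircle (1:ℝ))
      = ∑' k : ℤ, c k * Complex.exp (2 * Real.pi * Complex.I * k * x) := by
    intro x
    rw [hFapp]
    exact tsum_congr fun k => by rw [fourier_coe_apply]; norm_num
  calc ∫ x in Set.Icc (0:ℝ) 1, ‖∑' k : ℤ, c k * Complex.exp (2 * Real.pi * Complex.I * k * x)‖^2
      = ∫ x in Set.Icc (0:ℝ) 1, ‖F ((x : ℝ) : AddCircle (1:ℝ))‖^2 := by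
        refine setIntegral_congr_fun measurableSet_Icc fun x _ => ?_
        rw [hFx]
    _ = ∫ x in Set.Ioc (0:ℝ) 1, ‖F ((x : ℝ) : AddCircle (1:ℝ))‖^2 :=
        integral_Icc_eq_integral_Ioc
    _ = ∫ t : AddCircle (1:ℝ), ‖F t‖^2 := by
        have := AddCircle.integral_preimage (1:ℝ) 0 (fun t => ‖F t‖^2)
        rwa [zero_add] at this
    _ = ∫ t : AddCircle (1:ℝ), ‖F t‖^2 ∂AddCircle.haarAddCircle := by
        rw [AddCircle.volume_eq_smul_haarAddCircle, integral_smul_measure]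
        simp
    _ = ∫ t : AddCircle (1:ℝ), ‖F2 t‖^2 ∂AddCircle.haarAddCircle :=
        integral_congr_ae (hae.mono fun t ht => by dsimp only; rw [ht])
    _ = ∑' k : ℤ, ‖c k‖^2 := by rw [← hpars, hrhs]

lemma periodization {h : ℝ → ℝ} (hint : Integrable h) :
    HasSum (fun k : ℤ => ∫ ξ in Set.Icc (-Real.pi) Real.pi, h (ξ + 2*Real.pi*k))
      (∫ z : ℝ, h z) := by
  have h2pi : (2*Real.pi) ≠ 0 := by positivity
  set h₂ : ℝ → ℝ := fun t => (2*Real.pi) • h (2*Real.pi*t - Real.pi) with hh2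
  have hint1 : Integrable (fun s : ℝ => h (s - Real.pi)) := hint.comp_sub_right _
  have hint2 : Integrable h₂ := by
    have := (hint1.comp_mul_left' h2pi).const_mul (2*Real.pi)
    simpa [hh2, smul_eq_mul] using this
  have hs := hint2.hasSum_intervalIntegral_comp_add_int
  have hval : ∫ t : ℝ, h₂ t = ∫ z : ℝ, h z := by
    rw [hh2]
    simp only [smul_eq_mul]
    rw [MeasureTheory.integral_const_mul]
    have : ∀ t : ℝ, h (2*Real.pi*t - Real.pi) = (fun s => h (s - Real.pi)) (2*Real.pi*t) := by
      intro t; rfl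
    rw [show (fun t : ℝ => h (2*Real.pi*t - Real.pi)) = fun t => (fun s => h (s - Real.pi)) (2*Real.pi*t) from rfl]
    rw [Measure.integral_comp_mul_left (fun s => h (s - Real.pi)) (2*Real.pi)]
    rw [integral_sub_right_eq_self h Real.pi]
    rw [smul_eq_mul, abs_of_pos (by positivity)]
    field_simp
  have hterm : ∀ n : ℤ, (∫ x in (0:ℝ)..1, h₂ (x + n))
      = ∫ ξ in Set.Icc (-Real.pi) Real.pi, h (ξ + 2*Real.pi*n) := by
    intro n
    have e1 : (∫ x in (0:ℝ)..1, h₂ (x + n))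
        = (2*Real.pi) • ∫ x in (0:ℝ)..1, (fun s => h (s + (2*Real.pi*n - Real.pi))) (2*Real.pi*x) := by
      rw [← intervalIntegral.integral_smul]
      refine intervalIntegral.integral_congr fun x _ => ?_
      simp only [hh2, smul_eq_mul]
      ring_nf
    rw [e1, intervalIntegral.smul_integral_comp_mul_left
      (fun s => h (s + (2*Real.pi*n - Real.pi))) (2*Real.pi), mul_zero, mul_one,
      intervalIntegral.integral_comp_add_right]
    have e2 : (∫ ξ in Set.Icc (-Real.pi) Real.pi, h (ξ + 2*Real.pi*n))
        = ∫ ξ in (-Real.pi)..Real.pi, h (ξ + 2*Real.pi*n) := by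
      rw [intervalIntegral.integral_of_le (by linarith [Real.pi_pos]),
        integral_Icc_eq_integral_Ioc]
    rw [e2, intervalIntegral.integral_comp_add_right]
    congr 1 <;> ring
  rw [← hval]
  simpa only [hterm] using hs

/-- Parseval identity for the Bloch transform, eq. (psvl).
For Schwartz `g`, `∫_ℝ |g|² = 2π ∫_{-π}^{π} ∫_0^1 |ǧ(ξ,x)|² dx dξ`. -/
theorem stmt_4 (g : SchwartzMap ℝ ℂ) :
    (∫ x : ℝ, ‖g x‖ ^ 2)
      = 2 * Real.pi * ∫ ξ in Set.Icc (-Real.pi) Real.pi,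
          ∫ x in Set.Icc (0:ℝ) 1, ‖blochT (fun y => g y) ξ x‖ ^ 2 := by
  have hpi : (0:ℝ) < 2 * Real.pi := by positivity
  set G : SchwartzMap ℝ ℂ := SchwartzMap.fourierTransformCLE ℝ (SchwartzMap ℝ ℂ) g with hGdef
  have hG : ⇑G = FourierTransform.fourier ⇑g := rfl
  have hfT : ∀ z : ℝ, fourierT (fun y => g y) z
      = ((1 / (2*Real.pi) : ℝ) : ℂ) * G (z / (2*Real.pi)) := by
    intro z; rw [fourierT_eq, hG]
  set h : ℝ → ℝ := fun z => ‖fourierT (fun y => g y) z‖^2 with hhdef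
  have hform : h = fun z => (1/(2*Real.pi))^2 * ‖G (z/(2*Real.pi))‖^2 := by
    funext z
    rw [hhdef]; dsimp only
    rw [hfT z, norm_mul, Complex.norm_real, Real.norm_eq_abs,
      abs_of_pos (by positivity), mul_pow]
  obtain ⟨C, hC0, hC⟩ := G.decay 0 0
  have hGbd : ∀ u : ℝ, ‖G u‖ ≤ C := by
    intro u; have := hC u; simpa [norm_iteratedFDeriv_zero] using this
  have hGsq_int : Integrable (fun u : ℝ => ‖G u‖^2) := by
    refine Integrable.mono' (G.integrable.norm.const_mul C)
      ((G.continuous.norm.pow 2).aestronglyMeasurable)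
      (Filter.Eventually.of_forall fun u => ?_)
    rw [Real.norm_eq_abs, abs_of_nonneg (by positivity), pow_two]
    exact mul_le_mul_of_nonneg_right (hGbd u) (norm_nonneg _)
  have hint_h : Integrable h := by
    rw [hform]
    have h1 := hGsq_int.comp_mul_left' (show ((2*Real.pi)⁻¹ : ℝ) ≠ 0 by positivity)
    have h2 : Integrable (fun z : ℝ => ‖G (z/(2*Real.pi))‖^2) := by
      simpa [div_eq_inv_mul] using h1
    exact h2.const_mul _
  have hcont_h : Continuous h := by
    rw [hform]
    exact continuous_const.mul ((G.continuous.comp (continuous_id.div_const _)).norm.pow 2)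
  have hinner : ∀ ξ : ℝ, (∫ x in Set.Icc (0:ℝ) 1, ‖blochT (fun y => g y) ξ x‖^2)
      = ∑' k : ℤ, h (ξ + 2*Real.pi*k) := by
    intro ξ
    set c : ℤ → ℂ := fun k => fourierT (fun y => g y) (ξ + 2*Real.pi*k) with hcdef
    have hck : ∀ k : ℤ, c k = ((1/(2*Real.pi):ℝ):ℂ) * G (ξ/(2*Real.pi) + k) := by
      intro k
      rw [hcdef]; dsimp only; rw [hfT]
      congr 2
      field_simp
    have hc : Summable c := by
      refine Summable.congr
        (((summable_schwartz_translate G (ξ/(2*Real.pi))).mul_left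
          (((1/(2*Real.pi):ℝ):ℂ)))) fun k => ?_
      rw [hck k]
    have hbloch : ∀ x : ℝ, blochT (fun y => g y) ξ x
        = ∑' k : ℤ, c k * Complex.exp (2*Real.pi*Complex.I*k*x) := by
      intro x
      rw [blochT]
      exact tsum_congr fun k => mul_comm _ _
    calc (∫ x in Set.Icc (0:ℝ) 1, ‖blochT (fun y => g y) ξ x‖^2)
        = ∫ x in Set.Icc (0:ℝ) 1,
            ‖∑' k : ℤ, c k * Complex.exp (2*Real.pi*Complex.I*k*x)‖^2 := by
          refine setIntegral_congr_fun measurableSet_Icc fun x _ => ?_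
          rw [hbloch]
      _ = ∑' k : ℤ, ‖c k‖^2 := circle_parseval c hc
      _ = ∑' k : ℤ, h (ξ + 2*Real.pi*k) := rfl
  have hper := periodization hint_h
  have houter : (∫ ξ in Set.Icc (-Real.pi) Real.pi, ∑' k : ℤ, h (ξ + 2*Real.pi*k))
      = ∫ z : ℝ, h z := by
    have hFint : ∀ k : ℤ, Integrable (fun ξ => h (ξ + 2*Real.pi*k))
        (volume.restrict (Set.Icc (-Real.pi) Real.pi)) := fun k =>
      (hcont_h.comp (continuous_id.add continuous_const)).integrableOn_Icc
    have hFsum : Summable fun k : ℤ =>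
        ∫ ξ in Set.Icc (-Real.pi) Real.pi, ‖h (ξ + 2*Real.pi*k)‖ := by
      refine hper.summable.congr fun k => ?_
      refine (setIntegral_congr_fun measurableSet_Icc fun ξ _ => ?_).symm
      rw [Real.norm_eq_abs, abs_of_nonneg (pow_nonneg (norm_nonneg _) _)]
    rw [← integral_tsum_of_summable_integral_norm hFint hFsum]
    exact hper.tsum_eq
  have hval : ∫ z : ℝ, h z = (1/(2*Real.pi)) * ∫ x : ℝ, ‖g x‖^2 := by
    rw [hform, MeasureTheory.integral_const_mul,
      Measure.integral_comp_div (fun u => ‖G u‖^2) (2*Real.pi)]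
    have hplanch : ∫ u : ℝ, ‖G u‖^2 = ∫ x : ℝ, ‖g x‖^2 := by
      have hp := plancherel_schwartz g
      rw [← hG] at hp
      exact hp
    rw [hplanch, smul_eq_mul, abs_of_pos hpi]
    field_simp
  rw [show (∫ ξ in Set.Icc (-Real.pi) Real.pi,
        ∫ x in Set.Icc (0:ℝ) 1, ‖blochT (fun y => g y) ξ x‖^2)
      = ∫ ξ in Set.Icc (-Real.pi) Real.pi, ∑' k : ℤ, h (ξ + 2*Real.pi*k) from
    setIntegral_congr_fun measurableSet_Icc fun ξ _ => hinner ξ]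
  rw [houter, hval]
  field_simp
end

section
/- Let g: ℝ → ℂ be continuous and 1-periodic with absolutely convergent Fourier series, i.e. g(x) = Σ_{m∈ℤ} c_m e^{2πimx} with Σ_{m∈ℤ}|c_m| < ∞, and let h: ℝ → ℂ be a Schwartz function. Then: (i) for all ξ, x ∈ ℝ, the Bloch transform of the product satisfies (gh)ˇ(ξ, x) = g(x) ȟ(ξ, x); and (ii) if moreover ĥ(z) = 0 for all |z| > π, then for all ξ with |ξ| < π and all x ∈ ℝ: (gh)ˇ(ξ, x) = g(x) ĥ(ξ). -/
set_option maxHeartbeats 1000000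

open MeasureTheory

private lemma norm_exp_I (r : ℝ) : ‖Complex.exp (r * Complex.I)‖ = 1 := by
  simp [Complex.norm_exp]

lemma fourierT_eq_s7 (h : SchwartzMap ℝ ℂ) (z : ℝ) :
    fourierT (fun y => h y) z
      = ((1 / (2 * Real.pi) : ℝ) : ℂ)
        * (SchwartzMap.fourierTransformCLM ℂ h) (z / (2 * Real.pi)) := by
  rw [SchwartzMap.fourierTransformCLM_apply, SchwartzMap.fourier_coe, Real.fourier_real_eq_integral_exp_smul]
  unfold fourierT
  push_cast
  congr 1
  apply integral_congr_ae
  filter_upwards with ω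
  rw [smul_eq_mul]
  congr 1
  have hπ : (Real.pi : ℂ) ≠ 0 := by exact_mod_cast Real.pi_ne_zero
  rw [Complex.exp_eq_exp_iff_exists_int]
  exact ⟨0, by push_cast; field_simp; ring⟩

lemma summable_schwartz_shift (φ : SchwartzMap ℝ ℂ) (a : ℝ) :
    Summable fun n : ℤ => ‖φ (a + n)‖ := by
  obtain ⟨C, hCpos, hC⟩ := φ.decay 2 0
  have hbound : ∀ x : ℝ, 1 ≤ |x| → ‖φ x‖ ≤ C * (1 / |x| ^ (2 : ℝ)) := by
    intro x hx
    have h1 := hC x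
    rw [norm_iteratedFDeriv_zero] at h1
    have hx2 : (0:ℝ) < |x| ^ (2:ℝ) := by positivity
    rw [Real.rpow_two]
    have : ‖x‖ ^ 2 = |x| * |x| := by rw [Real.norm_eq_abs]; ring
    rw [this] at h1
    rw [mul_one_div, le_div_iff₀ (by positivity)]
    nlinarith [norm_nonneg (φ x)]
  have hsum : Summable fun n : ℤ => C * (1 / |(n : ℝ) + a| ^ (2 : ℝ)) :=
    ((Real.summable_one_div_int_add_rpow a 2).mpr one_lt_two).mul_left C
  apply Summable.of_norm_bounded_eventually hsum
  have hfin : {n : ℤ | |(n : ℝ) + a| < 1}.Finite := by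
    apply (Set.finite_Icc (⌈-1 - a⌉) (⌊1 - a⌋)).subset
    intro n hn
    simp only [Set.mem_setOf_eq, abs_lt] at hn
    exact ⟨Int.ceil_le.mpr (by push_cast; linarith [hn.1]),
           Int.le_floor.mpr (by push_cast; linarith [hn.2])⟩
  apply Filter.eventually_cofinite.mpr
  apply hfin.subset
  intro n hn
  simp only [Set.mem_setOf_eq, not_le, norm_norm] at hn ⊢
  by_contra hcon
  push_neg at hcon
  exact absurd (hbound ((n : ℝ) + a) hcon) (by rw [add_comm (n:ℝ) a] at hn ⊢; exact not_le.mpr hn)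


lemma summable_H (h : SchwartzMap ℝ ℂ) (ξ : ℝ) :
    Summable fun k : ℤ => ‖fourierT (fun y => h y) (ξ + 2 * Real.pi * k)‖ := by
  have hs := (summable_schwartz_shift (SchwartzMap.fourierTransformCLM ℂ h)
    (ξ / (2 * Real.pi))).mul_left (1 / (2 * Real.pi))
  apply hs.congr
  intro k
  rw [fourierT_eq_s7, norm_mul, Complex.norm_real, Real.norm_eq_abs,
    abs_of_pos (by positivity : (0:ℝ) < 1 / (2 * Real.pi))]
  congr 2
  field_simp

lemma integrable_char_mul (h : SchwartzMap ℝ ℂ) (w : ℝ) :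
    Integrable (fun ω : ℝ => Complex.exp (-(Complex.I * ω * w)) * h ω) := by
  apply (h.integrable).bdd_mul
  · exact (Complex.continuous_exp.comp (by continuity)).aestronglyMeasurable
  · refine Filter.Eventually.of_forall (fun ω => (?_ : _ ≤ (1:ℝ)))
    have : (-(Complex.I * ω * w) : ℂ) = (↑(-(ω * w)) : ℝ) * Complex.I := by push_cast; ring
    rw [this, norm_exp_I]

lemma fourierT_mul (g : ℝ → ℂ) (c : ℤ → ℂ) (hc : Summable fun m : ℤ => ‖c m‖)
    (hgF : ∀ x : ℝ, g x = ∑' m : ℤ, c m * Complex.exp (2 * Real.pi * Complex.I * m * x))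
    (h : SchwartzMap ℝ ℂ) (z : ℝ) :
    fourierT (fun y => g y * h y) z
      = ∑' m : ℤ, c m * fourierT (fun y => h y) (z - 2 * Real.pi * m) := by
  unfold fourierT
  set F : ℤ → ℝ → ℂ := fun m ω =>
    c m * (Complex.exp (-(Complex.I * ω * ((z - 2 * Real.pi * (m : ℝ) : ℝ) : ℂ))) * h ω) with hF
  have step1 : ∀ ω : ℝ, Complex.exp (-(Complex.I * ω * z)) * (g ω * h ω)
      = ∑' m : ℤ, F m ω := by
    intro ω
    rw [hgF ω, ← tsum_mul_right, ← tsum_mul_left]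
    apply tsum_congr
    intro m
    have he : Complex.exp (-(Complex.I * ω * z)) * Complex.exp (2 * Real.pi * Complex.I * m * ω)
        = Complex.exp (-(Complex.I * ω * ((z - 2 * Real.pi * (m : ℝ) : ℝ) : ℂ))) := by
      rw [← Complex.exp_add]; congr 1; push_cast; ring
    rw [hF]
    linear_combination (c m * (h ω : ℂ)) * he
  have hint : ∀ m : ℤ, Integrable (F m) :=
    fun m => (integrable_char_mul h (z - 2 * Real.pi * (m : ℝ))).const_mul (c m)
  have hnorm : ∀ m : ℤ, (∫ ω : ℝ, ‖F m ω‖) = ‖c m‖ * ∫ ω : ℝ, ‖h ω‖ := by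
    intro m
    rw [← integral_const_mul]
    congr 1 with ω
    rw [hF, norm_mul, norm_mul]
    have : (-(Complex.I * ω * ((z - 2 * Real.pi * (m : ℝ) : ℝ) : ℂ)) : ℂ)
        = (↑(-(ω * (z - 2 * Real.pi * m))) : ℝ) * Complex.I := by push_cast; ring
    rw [this, norm_exp_I, one_mul]
  have hsum : Summable fun m : ℤ => ∫ ω : ℝ, ‖F m ω‖ :=
    (hc.mul_right (∫ ω : ℝ, ‖h ω‖)).congr fun m => (hnorm m).symm
  have swap := integral_tsum_of_summable_integral_norm hint hsum
  calc (1 / (2 * ↑Real.pi) : ℂ) * ∫ ω : ℝ, Complex.exp (-(Complex.I * ω * z)) * (g ω * h ω)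
      = (1 / (2 * ↑Real.pi) : ℂ) * ∑' m : ℤ, ∫ ω : ℝ, F m ω := by
        rw [swap]; congr 1; exact integral_congr_ae (Filter.Eventually.of_forall step1)
    _ = ∑' m : ℤ, c m * ((1 / (2 * ↑Real.pi) : ℂ) * ∫ ω : ℝ,
          Complex.exp (-(Complex.I * ω * ((z - 2 * Real.pi * (m : ℝ) : ℝ) : ℂ))) * h ω) := by
        rw [← tsum_mul_left]
        apply tsum_congr
        intro m
        rw [hF, integral_const_mul]
        ring

/-- two-scale property of the Bloch transform, Remark
`slowmod_Bloch_rmk`: for `g` continuous `1`-periodic with absolutely convergent Fourier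
series and `h` Schwartz, `(gh)ˇ(ξ,x) = g(x) ȟ(ξ,x)`; and if `ĥ` is supported in
`[-π,π]`, then `(gh)ˇ(ξ,x) = g(x) ĥ(ξ)` for `|ξ| < π`. -/
theorem stmt_7 (g : ℝ → ℂ) (c : ℤ → ℂ)
    (hg_cont : Continuous g) (hg_per : ∀ x, g (x + 1) = g x)
    (hc : Summable fun m : ℤ => ‖c m‖)
    (hgF : ∀ x : ℝ, g x = ∑' m : ℤ, c m * Complex.exp (2 * Real.pi * Complex.I * m * x))
    (h : SchwartzMap ℝ ℂ) :
    (∀ ξ x : ℝ, blochT (fun y => g y * h y) ξ x = g x * blochT (fun y => h y) ξ x) ∧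
    ((∀ z : ℝ, Real.pi < |z| → fourierT (fun y => h y) z = 0) →
      ∀ ξ : ℝ, |ξ| < Real.pi → ∀ x : ℝ,
        blochT (fun y => g y * h y) ξ x = g x * fourierT (fun y => h y) ξ) := by
  have key : ∀ ξ x : ℝ, blochT (fun y => g y * h y) ξ x
      = g x * blochT (fun y => h y) ξ x := by
    intro ξ x
    classical
    let H : ℝ → ℂ := fun w => fourierT (fun y => h y) w
    let e : ℤ → ℂ := fun k => Complex.exp (2 * Real.pi * Complex.I * k * x)
    have hnorme : ∀ k : ℤ, ‖e k‖ = 1 := by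
      intro k
      have h1 : (2 * (Real.pi:ℂ) * Complex.I * (k:ℂ) * (x:ℂ))
          = ((2 * Real.pi * k * x : ℝ) : ℂ) * Complex.I := by push_cast; ring
      show ‖Complex.exp (2 * (Real.pi:ℂ) * Complex.I * (k:ℂ) * (x:ℂ))‖ = 1
      rw [h1, norm_exp_I]
    have hemul : ∀ m j : ℤ, e (m + j) = e m * e j := by
      intro m j
      show Complex.exp _ = Complex.exp _ * Complex.exp _
      rw [← Complex.exp_add]
      congr 1
      push_cast
      ring
    let T : ℤ × ℤ → ℂ := fun p =>
      e p.1 * (c p.2 * H (ξ + 2 * Real.pi * p.1 - 2 * Real.pi * p.2))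
    let q : ℤ × ℤ ≃ ℤ × ℤ :=
      { toFun := fun p => (p.1 + p.2, p.1)
        invFun := fun p => (p.2, p.1 - p.2)
        left_inv := fun p => by simp
        right_inv := fun p => by simp }
    have hTq : ∀ m j : ℤ, T (q (m, j)) = e (m + j) * (c m * H (ξ + 2 * Real.pi * j)) := by
      intro m j
      show e (m + j) * (c m * H (ξ + 2 * Real.pi * ((m + j : ℤ) : ℝ) - 2 * Real.pi * m)) = _
      congr 2
      push_cast
      ring
    have hTsum : Summable T := by
      rw [← q.summable_iff]
      apply Summable.of_norm
      have base : Summable (fun p : ℤ × ℤ => ‖c p.1‖ * ‖H (ξ + 2 * Real.pi * p.2)‖) :=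
        hc.mul_of_nonneg (summable_H h ξ) (fun m => norm_nonneg _) (fun j => norm_nonneg _)
      apply base.congr
      intro p
      rw [Function.comp_apply]
      rw [show (p : ℤ × ℤ) = (p.1, p.2) from rfl, hTq p.1 p.2, norm_mul, norm_mul,
        hnorme, one_mul]
    have hTqsum : Summable (T ∘ q) := q.summable_iff.mpr hTsum
    calc blochT (fun y => g y * h y) ξ x
        = ∑' k : ℤ, e k * ∑' m : ℤ, c m * H (ξ + 2 * Real.pi * k - 2 * Real.pi * m) := by
          unfold blochT
          apply tsum_congr; intro k
          rw [fourierT_mul g c hc hgF h (ξ + 2 * Real.pi * k)]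
      _ = ∑' k : ℤ, ∑' m : ℤ, T (k, m) := by
          apply tsum_congr; intro k; rw [← tsum_mul_left]
      _ = ∑' p : ℤ × ℤ, T p := (Summable.tsum_prod hTsum).symm
      _ = ∑' p : ℤ × ℤ, T (q p) := (q.tsum_eq T).symm
      _ = ∑' m : ℤ, ∑' j : ℤ, T (q (m, j)) := Summable.tsum_prod hTqsum
      _ = ∑' m : ℤ, (c m * e m) * ∑' j : ℤ, e j * H (ξ + 2 * Real.pi * j) := by
          apply tsum_congr; intro m
          rw [← tsum_mul_left]
          apply tsum_congr; intro j
          rw [hTq m j, hemul m j]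
          ring
      _ = (∑' m : ℤ, c m * e m) * ∑' j : ℤ, e j * H (ξ + 2 * Real.pi * j) := tsum_mul_right
      _ = g x * blochT (fun y => h y) ξ x := by
          rw [hgF x]
          rfl
  refine ⟨key, ?_⟩
  intro hsupp ξ hξ x
  rw [key ξ x]
  congr 1
  unfold blochT
  rw [tsum_eq_single 0 ?_]
  · simp
  · intro k hk
    have hk1 : (1 : ℝ) ≤ |(k : ℝ)| := by
      have := Int.one_le_abs hk
      exact_mod_cast this
    have habs : |2 * Real.pi * (k : ℝ)| = 2 * Real.pi * |(k : ℝ)| := by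
      rw [abs_mul, abs_of_pos Real.two_pi_pos]
    have htri : |2 * Real.pi * (k : ℝ)| ≤ |ξ + 2 * Real.pi * k| + |ξ| := by
      calc |2 * Real.pi * (k : ℝ)| = |(ξ + 2 * Real.pi * k) + (-ξ)| := by ring_nf
        _ ≤ |ξ + 2 * Real.pi * k| + |(-ξ)| := abs_add_le _ _
        _ = |ξ + 2 * Real.pi * k| + |ξ| := by rw [abs_neg]
    have hgt : Real.pi < |ξ + 2 * Real.pi * (k : ℝ)| := by
      have h2 : 2 * Real.pi ≤ 2 * Real.pi * |(k : ℝ)| := by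
        nlinarith [Real.pi_pos]
      rw [habs] at htri
      nlinarith [Real.pi_pos]
    rw [hsupp _ hgt, mul_zero]
end

section
/- Let n ≥ 1, k̄ ≠ 0, c̄ ∈ ℝ, and let f: ℝⁿ → ℝⁿ be C². Let Ū: ℝ → ℝⁿ be three times continuously differentiable with k̄² Ū'' = k̄ ( (f∘Ū)' − c̄ Ū' ) on ℝ (a stationary solution of the system u_t + k̄(f(u)_x − c̄ u_x) = k̄² u_{xx}). Let I ⊆ ℝ be an open interval, let ũ: ℝ × I → ℝⁿ be C² and satisfy ũ_t + k̄( (f(ũ))_x − c̄ ũ_x ) = k̄² ũ_{xx} on ℝ × I, and let ψ: ℝ × I → ℝ be C² with ψ_x(x,t) ≠ 1 for all (x,t). Define v(x,t) := ũ(x − ψ(x,t), t) − Ū(x), the linear operator L w := k̄² w_{xx} + k̄ c̄ w_x − k̄ ∂_x( df(Ū) w ), and Q := −k̄ ( f(Ū+v) − f(Ū) − df(Ū) v ), R := −v ψ_t + k̄² v_x ψ_x/(1−ψ_x) + k̄² Ū' ψ_x²/(1−ψ_x), S := v ψ_x. Then pointwise on ℝ × I: ∂_t ( v + ψ Ū'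 ) − L ( v + ψ Ū' ) = ∂_x Q + ∂_x R + ∂_t S. -/
open MeasureTheory

section helpers
variable {E : Type*} [NormedAddCommGroup E] [NormedSpace ℝ E]

lemma clm_pair (T : ℝ × ℝ →L[ℝ] E) (c d : ℝ) :
    T (c, d) = c • T (1, 0) + d • T (0, 1) := by
  have h : (c, d) = c • ((1:ℝ), (0:ℝ)) + d • ((0:ℝ), (1:ℝ)) := by
    simp [Prod.ext_iff]
  rw [h, map_add, _root_.map_smul, _root_.map_smul]

lemma comp2 {F : ℝ × ℝ → E} {g h : ℝ → ℝ} {x g' h' : ℝ}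
    (hF : DifferentiableAt ℝ F (g x, h x)) (hg : HasDerivAt g g' x)
    (hh : HasDerivAt h h' x) :
    HasDerivAt (fun z => F (g z, h z)) (fderiv ℝ F (g x, h x) (g', h')) x :=
  hF.hasFDerivAt.comp_hasDerivAt x (hg.prodMk hh)

lemma comp2' {F : ℝ × ℝ → E} {g h : ℝ → ℝ} {x g' h' : ℝ}
    (hF : DifferentiableAt ℝ F (g x, h x)) (hg : HasDerivAt g g' x)
    (hh : HasDerivAt h h' x) :
    HasDerivAt (fun z => F (g z, h z))
      (g' • fderiv ℝ F (g x, h x) (1, 0) + h' • fderiv ℝ F (g x, h x) (0, 1)) x := by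
  rw [← clm_pair]; exact comp2 hF hg hh

lemma comp2d {F : ℝ × ℝ → E} {g h : ℝ → ℝ} {x g' h' : ℝ} (e : ℝ × ℝ)
    (hF : DifferentiableAt ℝ (fderiv ℝ F) (g x, h x)) (hg : HasDerivAt g g' x)
    (hh : HasDerivAt h h' x) :
    HasDerivAt (fun z => fderiv ℝ F (g z, h z) e)
      (fderiv ℝ (fderiv ℝ F) (g x, h x) (g', h') e) x := by
  have := (comp2 (F := fderiv ℝ F) hF hg hh).clm_apply (hasDerivAt_const x e)
  simpa using this

lemma comp2d' {F : ℝ × ℝ → E} {g h : ℝ → ℝ} {x g' h' : ℝ} (e : ℝ × ℝ)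
    (hF : DifferentiableAt ℝ (fderiv ℝ F) (g x, h x)) (hg : HasDerivAt g g' x)
    (hh : HasDerivAt h h' x) :
    HasDerivAt (fun z => fderiv ℝ F (g z, h z) e)
      (g' • fderiv ℝ (fderiv ℝ F) (g x, h x) (1, 0) e
        + h' • fderiv ℝ (fderiv ℝ F) (g x, h x) (0, 1) e) x := by
  have h2 := comp2d e hF hg hh
  rw [clm_pair (fderiv ℝ (fderiv ℝ F) (g x, h x)) g' h'] at h2
  simpa using h2

end helpers

set_option maxHeartbeats 4000000 in

/-- (Lemma `lem:canest`: the nonlinear perturbation equation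
`(∂_t - L)(v + ψ Ū') = ∂_x Q + ∂_x R + ∂_t S` for the modulated perturbation
`v(x,t) = ũ(x - ψ(x,t), t) - Ū(x)` of a periodic traveling wave of the viscous system
of conservation laws `u_t + k̄(f(u)_x - c̄ u_x) = k̄² u_{xx}`). -/
theorem stmt_11 (n : ℕ) (hn : 1 ≤ n) (kb : ℝ) (hkb : kb ≠ 0) (cb : ℝ)
    (f : EuclideanSpace ℝ (Fin n) → EuclideanSpace ℝ (Fin n)) (hf : ContDiff ℝ 2 f)
    (Ub : ℝ → EuclideanSpace ℝ (Fin n)) (hUb : ContDiff ℝ 3 Ub)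
    (hUode : ∀ x : ℝ, kb ^ 2 • deriv (deriv Ub) x
      = kb • (deriv (fun y => f (Ub y)) x - cb • deriv Ub x))
    (I : Set ℝ) (hIo : IsOpen I) (hIc : I.OrdConnected)
    (u : ℝ → ℝ → EuclideanSpace ℝ (Fin n))
    (hu : ContDiffOn ℝ 2 (fun pr : ℝ × ℝ => u pr.1 pr.2) (Set.univ ×ˢ I))
    (hupde : ∀ x : ℝ, ∀ t ∈ I,
      deriv (fun s => u x s) t
          + kb • (deriv (fun y => f (u y t)) x - cb • deriv (fun y => u y t) x)
        = kb ^ 2 • deriv (fun y => deriv (fun z => u z t) y) x)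
    (ψ : ℝ → ℝ → ℝ)
    (hψ : ContDiffOn ℝ 2 (fun pr : ℝ × ℝ => ψ pr.1 pr.2) (Set.univ ×ˢ I))
    (hψx : ∀ x : ℝ, ∀ t ∈ I, deriv (fun y => ψ y t) x ≠ 1)
    (v : ℝ → ℝ → EuclideanSpace ℝ (Fin n))
    (hv : ∀ x t, v x t = u (x - ψ x t) t - Ub x)
    (L : (ℝ → EuclideanSpace ℝ (Fin n)) → ℝ → EuclideanSpace ℝ (Fin n))
    (hL : ∀ w x, L w x = kb ^ 2 • deriv (deriv w) x + (kb * cb) • deriv w x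
      - kb • deriv (fun y => fderiv ℝ f (Ub y) (w y)) x)
    (Q R S : ℝ → ℝ → EuclideanSpace ℝ (Fin n))
    (hQ : ∀ x t, Q x t = -(kb • (f (Ub x + v x t) - f (Ub x) - fderiv ℝ f (Ub x) (v x t))))
    (hR : ∀ x t, R x t = -(deriv (fun s => ψ x s) t) • v x t
      + (kb ^ 2 * (deriv (fun y => ψ y t) x / (1 - deriv (fun y => ψ y t) x))) •
          deriv (fun y => v y t) x
      + (kb ^ 2 * ((deriv (fun y => ψ y t) x) ^ 2 / (1 - deriv (fun y => ψ y t) x))) •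
          deriv Ub x)
    (hS : ∀ x t, S x t = (deriv (fun y => ψ y t) x) • v x t) :
    ∀ x : ℝ, ∀ t ∈ I,
      deriv (fun s => v x s + ψ x s • deriv Ub x) t
          - L (fun y => v y t + ψ y t • deriv Ub y) x
        = deriv (fun y => Q y t) x + deriv (fun y => R y t) x + deriv (fun s => S x s) t := by
  intro x t ht
  have hso : IsOpen (Set.univ ×ˢ I : Set (ℝ × ℝ)) := isOpen_univ.prod hIo
  have hud : ∀ z : ℝ, ∀ s ∈ I, DifferentiableAt ℝ (fun pr : ℝ × ℝ => u pr.1 pr.2) (z, s) :=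
    fun z s hs => (hu.differentiableOn (by norm_num)).differentiableAt
      (hso.mem_nhds ⟨trivial, hs⟩)
  have hud2 : ∀ z : ℝ, ∀ s ∈ I, DifferentiableAt ℝ (fderiv ℝ (fun pr : ℝ × ℝ => u pr.1 pr.2)) (z, s) :=
    fun z s hs => ((hu.fderiv_of_isOpen (m := 1) hso (by norm_num)).differentiableOn
      (by norm_num)).differentiableAt (hso.mem_nhds ⟨trivial, hs⟩)
  have hpd : ∀ z : ℝ, ∀ s ∈ I, DifferentiableAt ℝ (fun pr : ℝ × ℝ => ψ pr.1 pr.2) (z, s) :=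
    fun z s hs => (hψ.differentiableOn (by norm_num)).differentiableAt
      (hso.mem_nhds ⟨trivial, hs⟩)
  have hpd2 : ∀ z : ℝ, ∀ s ∈ I, DifferentiableAt ℝ (fderiv ℝ (fun pr : ℝ × ℝ => ψ pr.1 pr.2)) (z, s) :=
    fun z s hs => ((hψ.fderiv_of_isOpen (m := 1) hso (by norm_num)).differentiableOn
      (by norm_num)).differentiableAt (hso.mem_nhds ⟨trivial, hs⟩)
  have hUb1 : Differentiable ℝ Ub := hUb.differentiable (by norm_num)
  have hUbc2 : ContDiff ℝ 2 (deriv Ub) := by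
    have h3 : ContDiff ℝ ((2 : ℕ) + 1 : ℕ) Ub := hUb
    rw [show (((2:ℕ) + 1 : ℕ) : WithTop ℕ∞) = (2 : ℕ) + 1 by norm_num,
      contDiff_succ_iff_deriv] at h3
    exact h3.2.2
  have hUb2 : Differentiable ℝ (deriv Ub) := hUbc2.differentiable (by norm_num)
  have hUb3 : Differentiable ℝ (deriv (deriv Ub)) := by
    have h2 : ContDiff ℝ ((1 : ℕ) + 1 : ℕ) (deriv Ub) := hUbc2
    rw [show (((1:ℕ) + 1 : ℕ) : WithTop ℕ∞) = (1 : ℕ) + 1 by norm_num,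
      contDiff_succ_iff_deriv] at h2
    exact h2.2.2.differentiable (by norm_num)
  have hfd : Differentiable ℝ f := hf.differentiable (by norm_num)
  have hfd2 : Differentiable ℝ (fderiv ℝ f) :=
    (hf.fderiv_right (m := 1) (by norm_num)).differentiable (by norm_num)
  -- slice derivatives of ψ
  have Hψ1 : ∀ z : ℝ, ∀ s ∈ I, HasDerivAt (fun w => ψ w s) ((fderiv ℝ (fun pr : ℝ × ℝ => ψ pr.1 pr.2)) (z, s) (1, 0)) z := by
    intro z s hs
    have h := comp2' (F := fun pr : ℝ × ℝ => ψ pr.1 pr.2) (g := fun w => w) (h := fun _ => s)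
      (hpd z s hs) (hasDerivAt_id z) (hasDerivAt_const z s)
    exact h.congr_deriv (by module)
  have Hψ2 : ∀ z : ℝ, HasDerivAt (fun s => ψ z s) ((fderiv ℝ (fun pr : ℝ × ℝ => ψ pr.1 pr.2)) (z, t) (0, 1)) t := by
    intro z
    have h := comp2' (F := fun pr : ℝ × ℝ => ψ pr.1 pr.2) (g := fun _ => z) (h := fun s => s)
      (hpd z t ht) (hasDerivAt_const t z) (hasDerivAt_id t)
    exact h.congr_deriv (by module)
  have ha : 1 - (fderiv ℝ (fun pr : ℝ × ℝ => ψ pr.1 pr.2)) (x, t) (1, 0) ≠ 0 := by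
    have h := hψx x t ht
    rw [(Hψ1 x t ht).deriv] at h
    exact sub_ne_zero_of_ne (Ne.symm h)
  -- slice derivatives of u
  have Hu : ∀ z : ℝ, HasDerivAt (fun w => u w t) ((fderiv ℝ (fun pr : ℝ × ℝ => u pr.1 pr.2)) (z, t) (1, 0)) z := by
    intro z
    have h := comp2' (F := fun pr : ℝ × ℝ => u pr.1 pr.2) (g := fun w => w) (h := fun _ => t)
      (hud z t ht) (hasDerivAt_id z) (hasDerivAt_const z t)
    exact h.congr_deriv (by module)
  have Hut : HasDerivAt (fun s => u (x - ψ x t) s) ((fderiv ℝ (fun pr : ℝ × ℝ => u pr.1 pr.2)) (x - ψ x t, t) (0, 1)) t := by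
    have h := comp2' (F := fun pr : ℝ × ℝ => u pr.1 pr.2) (g := fun _ => x - ψ x t)
      (h := fun s => s) (hud (x - ψ x t) t ht) (hasDerivAt_const t (x - ψ x t)) (hasDerivAt_id t)
    exact h.congr_deriv (by module)
  have HuP : HasDerivAt (fun z => (fderiv ℝ (fun pr : ℝ × ℝ => u pr.1 pr.2)) (z, t) (1, 0)) ((fderiv ℝ (fderiv ℝ (fun pr : ℝ × ℝ => u pr.1 pr.2))) (x - ψ x t, t) (1, 0) (1, 0))
      (x - ψ x t) := by
    have h := comp2d' (F := fun pr : ℝ × ℝ => u pr.1 pr.2) (g := fun w => w) (h := fun _ => t)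
      ((1:ℝ), (0:ℝ)) (hud2 (x - ψ x t) t ht) (hasDerivAt_id (x - ψ x t))
      (hasDerivAt_const (x - ψ x t) t)
    exact h.congr_deriv (by module)
  have Hcomp : ∀ z : ℝ, HasDerivAt (fun w => u (w - ψ w t) t)
      ((1 - (fderiv ℝ (fun pr : ℝ × ℝ => ψ pr.1 pr.2)) (z, t) (1, 0)) • (fderiv ℝ (fun pr : ℝ × ℝ => u pr.1 pr.2)) (z - ψ z t, t) (1, 0)) z := by
    intro z
    have h := comp2' (F := fun pr : ℝ × ℝ => u pr.1 pr.2) (g := fun w => w - ψ w t)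
      (h := fun _ => t) (hud (z - ψ z t) t ht) ((hasDerivAt_id z).sub (Hψ1 z t ht))
      (hasDerivAt_const z t)
    exact h.congr_deriv (by module)
  have HuPc : HasDerivAt (fun z => (fderiv ℝ (fun pr : ℝ × ℝ => u pr.1 pr.2)) (z - ψ z t, t) (1, 0))
      ((1 - (fderiv ℝ (fun pr : ℝ × ℝ => ψ pr.1 pr.2)) (x, t) (1, 0)) • (fderiv ℝ (fderiv ℝ (fun pr : ℝ × ℝ => u pr.1 pr.2))) (x - ψ x t, t) (1, 0) (1, 0)) x := by
    have h := comp2d' (F := fun pr : ℝ × ℝ => u pr.1 pr.2) (g := fun w => w - ψ w t)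
      (h := fun _ => t) ((1:ℝ), (0:ℝ)) (hud2 (x - ψ x t) t ht)
      ((hasDerivAt_id x).sub (Hψ1 x t ht)) (hasDerivAt_const x t)
    exact h.congr_deriv (by module)
  have Hψ1x : HasDerivAt (fun z => (fderiv ℝ (fun pr : ℝ × ℝ => ψ pr.1 pr.2)) (z, t) (1, 0)) ((fderiv ℝ (fderiv ℝ (fun pr : ℝ × ℝ => ψ pr.1 pr.2))) (x, t) (1, 0) (1, 0)) x := by
    have h := comp2d' (F := fun pr : ℝ × ℝ => ψ pr.1 pr.2) (g := fun w => w) (h := fun _ => t)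
      ((1:ℝ), (0:ℝ)) (hpd2 x t ht) (hasDerivAt_id x) (hasDerivAt_const x t)
    exact h.congr_deriv (by module)
  have Hψ2x : HasDerivAt (fun z => (fderiv ℝ (fun pr : ℝ × ℝ => ψ pr.1 pr.2)) (z, t) (0, 1)) ((fderiv ℝ (fderiv ℝ (fun pr : ℝ × ℝ => ψ pr.1 pr.2))) (x, t) (1, 0) (0, 1)) x := by
    have h := comp2d' (F := fun pr : ℝ × ℝ => ψ pr.1 pr.2) (g := fun w => w) (h := fun _ => t)
      ((0:ℝ), (1:ℝ)) (hpd2 x t ht) (hasDerivAt_id x) (hasDerivAt_const x t)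
    exact h.congr_deriv (by module)
  have Hψ1t : HasDerivAt (fun s => (fderiv ℝ (fun pr : ℝ × ℝ => ψ pr.1 pr.2)) (x, s) (1, 0)) ((fderiv ℝ (fderiv ℝ (fun pr : ℝ × ℝ => ψ pr.1 pr.2))) (x, t) (0, 1) (1, 0)) t := by
    have h := comp2d' (F := fun pr : ℝ × ℝ => ψ pr.1 pr.2) (g := fun _ => x) (h := fun s => s)
      ((1:ℝ), (0:ℝ)) (hpd2 x t ht) (hasDerivAt_const t x) (hasDerivAt_id t)
    exact h.congr_deriv (by module)
  have hsym : (fderiv ℝ (fderiv ℝ (fun pr : ℝ × ℝ => ψ pr.1 pr.2))) (x, t) (1, 0) (0, 1) = (fderiv ℝ (fderiv ℝ (fun pr : ℝ × ℝ => ψ pr.1 pr.2))) (x, t) (0, 1) (1, 0) := by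
    have hm : ((x, t) : ℝ × ℝ) ∈ Set.univ ×ˢ I := ⟨trivial, ht⟩
    have h := (hψ.contDiffAt (hso.mem_nhds hm)).isSymmSndFDerivAt (by simp [minSmoothness_of_isRCLikeNormedField])
    exact h.eq (1, 0) (0, 1)
  -- v derivatives
  have Hv : ∀ z : ℝ, HasDerivAt (fun w => v w t)
      ((1 - (fderiv ℝ (fun pr : ℝ × ℝ => ψ pr.1 pr.2)) (z, t) (1, 0)) • (fderiv ℝ (fun pr : ℝ × ℝ => u pr.1 pr.2)) (z - ψ z t, t) (1, 0) - deriv Ub z) z := by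
    intro z
    have h1 : (fun w => v w t) = fun w => u (w - ψ w t) t - Ub w := by
      funext w; rw [hv]
    rw [h1]
    exact (Hcomp z).sub (hUb1 z).hasDerivAt
  have Hvt : HasDerivAt (fun s => v x s)
      ((fderiv ℝ (fun pr : ℝ × ℝ => u pr.1 pr.2)) (x - ψ x t, t) (0, 1) - (fderiv ℝ (fun pr : ℝ × ℝ => ψ pr.1 pr.2)) (x, t) (0, 1) • (fderiv ℝ (fun pr : ℝ × ℝ => u pr.1 pr.2)) (x - ψ x t, t) (1, 0)) t := by
    have h1 : (fun s => v x s) = fun s => u (x - ψ x s) s - Ub x := by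
      funext s; rw [hv]
    rw [h1]
    have h := (comp2' (F := fun pr : ℝ × ℝ => u pr.1 pr.2) (g := fun s => x - ψ x s)
      (h := fun s => s) (hud (x - ψ x t) t ht) ((hasDerivAt_const t x).sub (Hψ2 x))
      (hasDerivAt_id t)).sub_const (Ub x)
    exact h.congr_deriv (by module)
  -- f-related derivatives
  have HfUb : ∀ z : ℝ, HasDerivAt (fun w => f (Ub w)) (fderiv ℝ f (Ub z) (deriv Ub z)) z :=
    fun z => (hfd (Ub z)).hasFDerivAt.comp_hasDerivAt z (hUb1 z).hasDerivAt
  have HA : ∀ z : ℝ, HasDerivAt (fun w => fderiv ℝ f (Ub w))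
      ((fderiv ℝ (fderiv ℝ f) (Ub z)) (deriv Ub z)) z :=
    fun z => (hfd2 (Ub z)).hasFDerivAt.comp_hasDerivAt z (hUb1 z).hasDerivAt
  have HfC : HasDerivAt (fun w => f (u (w - ψ w t) t))
      (fderiv ℝ f (u (x - ψ x t) t)
        ((1 - (fderiv ℝ (fun pr : ℝ × ℝ => ψ pr.1 pr.2)) (x, t) (1, 0)) • (fderiv ℝ (fun pr : ℝ × ℝ => u pr.1 pr.2)) (x - ψ x t, t) (1, 0))) x :=
    (hfd (u (x - ψ x t) t)).hasFDerivAt.comp_hasDerivAt x (Hcomp x)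
  have HfY : HasDerivAt (fun w => f (u w t))
      (fderiv ℝ f (u (x - ψ x t) t) ((fderiv ℝ (fun pr : ℝ × ℝ => u pr.1 pr.2)) (x - ψ x t, t) (1, 0))) (x - ψ x t) :=
    (hfd (u (x - ψ x t) t)).hasFDerivAt.comp_hasDerivAt (x - ψ x t) (Hu (x - ψ x t))
  -- the profile ODE and its consequences
  have ode1 : ∀ z : ℝ, kb ^ 2 • deriv (deriv Ub) z
      = kb • (fderiv ℝ f (Ub z) (deriv Ub z) - cb • deriv Ub z) := by
    intro z
    have h := hUode z
    rwa [(HfUb z).deriv] at h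
  have hAUb : fderiv ℝ f (Ub x) (deriv Ub x) = kb • deriv (deriv Ub) x + cb • deriv Ub x := by
    have h2 : kb • (kb • deriv (deriv Ub) x)
        = kb • (fderiv ℝ f (Ub x) (deriv Ub x) - cb • deriv Ub x) := by
      rw [smul_smul, ← pow_two]; exact ode1 x
    have h3 := smul_right_injective (EuclideanSpace ℝ (Fin n)) hkb h2
    exact sub_eq_iff_eq_add.mp h3.symm
  have hode2 : kb ^ 2 • deriv (deriv (deriv Ub)) x
      = kb • ((fderiv ℝ (fderiv ℝ f) (Ub x)) (deriv Ub x) (deriv Ub x)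
          + fderiv ℝ f (Ub x) (deriv (deriv Ub) x) - cb • deriv (deriv Ub) x) := by
    have hl : HasDerivAt (fun z => kb ^ 2 • deriv (deriv Ub) z)
        (kb ^ 2 • deriv (deriv (deriv Ub)) x) x := ((hUb3 x).hasDerivAt).const_smul (kb ^ 2)
    have hr : HasDerivAt (fun z => kb • (fderiv ℝ f (Ub z) (deriv Ub z) - cb • deriv Ub z))
        (kb • ((fderiv ℝ (fderiv ℝ f) (Ub x)) (deriv Ub x) (deriv Ub x)
          + fderiv ℝ f (Ub x) (deriv (deriv Ub) x) - cb • deriv (deriv Ub) x)) x :=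
      (((HA x).clm_apply (hUb2 x).hasDerivAt).sub
        (((hUb2 x).hasDerivAt).const_smul cb)).const_smul kb
    have heq : (fun z => kb ^ 2 • deriv (deriv Ub) z)
        = fun z => kb • (fderiv ℝ f (Ub z) (deriv Ub z) - cb • deriv Ub z) := funext ode1
    rw [heq] at hl
    exact hl.unique hr
  have hUb3eq : deriv (deriv (deriv Ub)) x
      = kb⁻¹ • ((fderiv ℝ (fderiv ℝ f) (Ub x)) (deriv Ub x) (deriv Ub x)
          + fderiv ℝ f (Ub x) (deriv (deriv Ub) x) - cb • deriv (deriv Ub) x) := by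
    rw [eq_inv_smul_iff₀ hkb]
    have h2 : kb • (kb • deriv (deriv (deriv Ub)) x)
        = kb • ((fderiv ℝ (fderiv ℝ f) (Ub x)) (deriv Ub x) (deriv Ub x)
          + fderiv ℝ f (Ub x) (deriv (deriv Ub) x) - cb • deriv (deriv Ub) x) := by
      rw [smul_smul, ← pow_two]; exact hode2
    exact smul_right_injective (EuclideanSpace ℝ (Fin n)) hkb h2
  -- the PDE at the shifted point
  have Eu : deriv (fun w => u w t) = fun z => (fderiv ℝ (fun pr : ℝ × ℝ => u pr.1 pr.2)) (z, t) (1, 0) :=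
    funext fun z => (Hu z).deriv
  have hut : (fderiv ℝ (fun pr : ℝ × ℝ => u pr.1 pr.2)) (x - ψ x t, t) (0, 1)
      = kb ^ 2 • (fderiv ℝ (fderiv ℝ (fun pr : ℝ × ℝ => u pr.1 pr.2))) (x - ψ x t, t) (1, 0) (1, 0)
        - kb • (fderiv ℝ f (u (x - ψ x t) t) ((fderiv ℝ (fun pr : ℝ × ℝ => u pr.1 pr.2)) (x - ψ x t, t) (1, 0))
          - cb • (fderiv ℝ (fun pr : ℝ × ℝ => u pr.1 pr.2)) (x - ψ x t, t) (1, 0)) := by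
    have h := hupde (x - ψ x t) t ht
    rw [Hut.deriv, HfY.deriv, (Hu (x - ψ x t)).deriv] at h
    simp only [Eu] at h
    rw [HuP.deriv] at h
    exact eq_sub_of_add_eq h
  -- the four pieces of the target identity
  have hG1 : deriv (fun s => v x s + ψ x s • deriv Ub x) t
      = ((fderiv ℝ (fun pr : ℝ × ℝ => u pr.1 pr.2)) (x - ψ x t, t) (0, 1) - (fderiv ℝ (fun pr : ℝ × ℝ => ψ pr.1 pr.2)) (x, t) (0, 1) • (fderiv ℝ (fun pr : ℝ × ℝ => u pr.1 pr.2)) (x - ψ x t, t) (1, 0))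
        + (fderiv ℝ (fun pr : ℝ × ℝ => ψ pr.1 pr.2)) (x, t) (0, 1) • deriv Ub x :=
    (Hvt.add ((Hψ2 x).smul_const (deriv Ub x))).deriv
  have hw : ∀ z : ℝ, HasDerivAt (fun w => v w t + ψ w t • deriv Ub w)
      (((1 - (fderiv ℝ (fun pr : ℝ × ℝ => ψ pr.1 pr.2)) (z, t) (1, 0)) • (fderiv ℝ (fun pr : ℝ × ℝ => u pr.1 pr.2)) (z - ψ z t, t) (1, 0) - deriv Ub z)
        + (ψ z t • deriv (deriv Ub) z + (fderiv ℝ (fun pr : ℝ × ℝ => ψ pr.1 pr.2)) (z, t) (1, 0) • deriv Ub z)) z :=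
    fun z => (Hv z).add ((Hψ1 z t ht).smul (hUb2 z).hasDerivAt)
  have hEw : deriv (fun w => v w t + ψ w t • deriv Ub w)
      = fun z => ((1 - (fderiv ℝ (fun pr : ℝ × ℝ => ψ pr.1 pr.2)) (z, t) (1, 0)) • (fderiv ℝ (fun pr : ℝ × ℝ => u pr.1 pr.2)) (z - ψ z t, t) (1, 0) - deriv Ub z)
        + (ψ z t • deriv (deriv Ub) z + (fderiv ℝ (fun pr : ℝ × ℝ => ψ pr.1 pr.2)) (z, t) (1, 0) • deriv Ub z) :=
    funext fun z => (hw z).deriv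
  have HV1 : HasDerivAt
      (fun z => (1 - (fderiv ℝ (fun pr : ℝ × ℝ => ψ pr.1 pr.2)) (z, t) (1, 0)) • (fderiv ℝ (fun pr : ℝ × ℝ => u pr.1 pr.2)) (z - ψ z t, t) (1, 0) - deriv Ub z)
      (((1 - (fderiv ℝ (fun pr : ℝ × ℝ => ψ pr.1 pr.2)) (x, t) (1, 0)) • ((1 - (fderiv ℝ (fun pr : ℝ × ℝ => ψ pr.1 pr.2)) (x, t) (1, 0)) • (fderiv ℝ (fderiv ℝ (fun pr : ℝ × ℝ => u pr.1 pr.2))) (x - ψ x t, t) (1, 0) (1, 0))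
        + (0 - (fderiv ℝ (fderiv ℝ (fun pr : ℝ × ℝ => ψ pr.1 pr.2))) (x, t) (1, 0) (1, 0)) • (fderiv ℝ (fun pr : ℝ × ℝ => u pr.1 pr.2)) (x - ψ x t, t) (1, 0))
        - deriv (deriv Ub) x) x :=
    (((hasDerivAt_const x (1:ℝ)).sub Hψ1x).smul HuPc).sub (hUb2 x).hasDerivAt
  have HW1 := HV1.add
    (((Hψ1 x t ht).smul (hUb3 x).hasDerivAt).add (Hψ1x.smul (hUb2 x).hasDerivAt))
  have hG2A := HW1.deriv
  beta_reduce at hG2A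
  simp only [Pi.add_def, Pi.smul_def'] at hG2A
  have hG2c : deriv (fun z => fderiv ℝ f (Ub z) (v z t + ψ z t • deriv Ub z)) x
      = (fderiv ℝ (fderiv ℝ f) (Ub x)) (deriv Ub x) (v x t + ψ x t • deriv Ub x)
        + fderiv ℝ f (Ub x)
          (((1 - (fderiv ℝ (fun pr : ℝ × ℝ => ψ pr.1 pr.2)) (x, t) (1, 0)) • (fderiv ℝ (fun pr : ℝ × ℝ => u pr.1 pr.2)) (x - ψ x t, t) (1, 0) - deriv Ub x)
            + (ψ x t • deriv (deriv Ub) x + (fderiv ℝ (fun pr : ℝ × ℝ => ψ pr.1 pr.2)) (x, t) (1, 0) • deriv Ub x)) :=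
    ((HA x).clm_apply (hw x)).deriv
  -- Q piece
  have hvv : ∀ a b : EuclideanSpace ℝ (Fin n), a + (b - a) = b := fun a b => by abel
  have EQ : (fun z => Q z t) = fun z => -(kb • (f (u (z - ψ z t) t) - f (Ub z)
      - fderiv ℝ f (Ub z) (u (z - ψ z t) t - Ub z))) := by
    funext z
    rw [hQ, hv, hvv]
  have Hv' : HasDerivAt (fun w => u (w - ψ w t) t - Ub w)
      ((1 - (fderiv ℝ (fun pr : ℝ × ℝ => ψ pr.1 pr.2)) (x, t) (1, 0)) • (fderiv ℝ (fun pr : ℝ × ℝ => u pr.1 pr.2)) (x - ψ x t, t) (1, 0) - deriv Ub x) x :=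
    (Hcomp x).sub (hUb1 x).hasDerivAt
  have hG3 := ((((HfC.sub (HfUb x)).sub ((HA x).clm_apply Hv')).const_smul kb).neg).deriv
  beta_reduce at hG3
  -- R piece
  have ER : (fun z => R z t) = fun z =>
      -(fderiv ℝ (fun pr : ℝ × ℝ => ψ pr.1 pr.2)) (z, t) (0, 1) • v z t
      + (kb ^ 2 * ((fderiv ℝ (fun pr : ℝ × ℝ => ψ pr.1 pr.2)) (z, t) (1, 0) / (1 - (fderiv ℝ (fun pr : ℝ × ℝ => ψ pr.1 pr.2)) (z, t) (1, 0)))) •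
          ((1 - (fderiv ℝ (fun pr : ℝ × ℝ => ψ pr.1 pr.2)) (z, t) (1, 0)) • (fderiv ℝ (fun pr : ℝ × ℝ => u pr.1 pr.2)) (z - ψ z t, t) (1, 0) - deriv Ub z)
      + (kb ^ 2 * ((fderiv ℝ (fun pr : ℝ × ℝ => ψ pr.1 pr.2)) (z, t) (1, 0) ^ 2 / (1 - (fderiv ℝ (fun pr : ℝ × ℝ => ψ pr.1 pr.2)) (z, t) (1, 0)))) • deriv Ub z := by
    funext z
    rw [hR, (Hψ2 z).deriv, (Hψ1 z t ht).deriv, (Hv z).deriv]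
  have HR := ((Hψ2x.neg.smul (Hv x)).add
      (((Hψ1x.div ((hasDerivAt_const x (1:ℝ)).sub Hψ1x) ha).const_mul (kb ^ 2)).smul HV1)).add
      ((((Hψ1x.pow 2).div ((hasDerivAt_const x (1:ℝ)).sub Hψ1x) ha).const_mul (kb ^ 2)).smul
        (hUb2 x).hasDerivAt)
  have hG4 := HR.deriv
  beta_reduce at hG4
  -- S piece
  have hES : (fun s => S x s) =ᶠ[nhds t] fun s => (fderiv ℝ (fun pr : ℝ × ℝ => ψ pr.1 pr.2)) (x, s) (1, 0) • v x s := by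
    filter_upwards [hIo.mem_nhds ht] with s hs
    rw [hS, (Hψ1 x s hs).deriv]
  have ES := hES.deriv_eq
  have hG5 := (Hψ1t.smul Hvt).deriv
  beta_reduce at hG5
  simp only [Pi.add_def, Pi.sub_def, Pi.neg_def, Pi.smul_def, Pi.smul_def', Pi.mul_def, Pi.div_def,
    Pi.pow_def] at hG3 hG4 hG5
  -- assemble
  rw [hG1, ES]
  simp only [hL]
  rw [EQ, ER]
  simp only [hEw]
  rw [hG2A, hG2c, hG3, hG4, hG5]
  simp only [hv, hut, hsym, hUb3eq, hAUb, map_add, map_sub, _root_.map_smul]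
  match_scalars
  all_goals field_simp
  all_goals ring
end

section
/- For every σ > 0 and every y ∈ ℝ, the principal value integral p.v. ∫_ℝ e^{iξy} e^{−σξ²} (iξ)^{−1} dξ := lim_{ε→0⁺} ∫_{|ξ| ≥ ε} e^{iξy} e^{−σξ²} (iξ)^{−1} dξ exists and equals 2√π ∫_0^{y/(2√σ)} e^{−u²} du. In particular its modulus is at most π, uniformly in y ∈ ℝ and σ > 0. -/
open MeasureTheory Real

namespace Stmt16Aux


lemma cos_gaussian (σ : ℝ) (hσ : 0 < σ) (t : ℝ) :
    ∫ x : ℝ, Real.cos (t * x) * Real.exp (-(σ * x ^ 2)) =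
      Real.sqrt (π / σ) * Real.exp (-(t ^ 2) / (4 * σ)) := by
  have h := fourierIntegral_gaussian (b := (σ : ℂ)) (by simpa using hσ) (t : ℂ)
  have h2 : ((π : ℂ) / σ) ^ ((1:ℂ) / 2) = ((Real.sqrt (π / σ) : ℝ) : ℂ) := by
    rw [Real.sqrt_eq_rpow, show ((1:ℂ)/2) = ((1/2 : ℝ) : ℂ) by norm_num,
      ← Complex.ofReal_div, ← Complex.ofReal_cpow (by positivity)]
  rw [h2] at h
  have hint : Integrable fun x : ℝ =>
      Complex.exp (Complex.I * t * x) * Complex.exp (-(σ:ℂ) * x ^ 2) := by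
    have := integrable_cexp_quadratic (b := (σ:ℂ)) (by simpa using hσ) (Complex.I * t) 0
    refine this.congr (Filter.Eventually.of_forall fun x => ?_)
    simp only [← Complex.exp_add]; ring_nf
  have key := congrArg Complex.re h
  rw [show ((∫ x : ℝ, Complex.exp (Complex.I * t * x) * Complex.exp (-(σ:ℂ) * x ^ 2)).re)
      = ∫ x : ℝ, (Complex.exp (Complex.I * t * x) * Complex.exp (-(σ:ℂ) * x ^ 2)).re
      from (integral_re hint).symm] at key
  calc ∫ x : ℝ, Real.cos (t * x) * Real.exp (-(σ * x ^ 2))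
      = ∫ x : ℝ, Complex.re (Complex.exp (Complex.I * t * x) * Complex.exp (-(σ:ℂ) * x ^ 2)) := by
        congr 1; ext x
        rw [show (-(σ:ℂ) * (x:ℂ) ^ 2) = ((-(σ * x ^ 2) : ℝ) : ℂ) by push_cast; ring,
          show (Complex.I * t * x : ℂ) = ((t * x : ℝ) : ℂ) * Complex.I by push_cast; ring,
          ← Complex.ofReal_exp, Complex.exp_mul_I]
        simp [Complex.cos_ofReal_re, Complex.cos_ofReal_im, Complex.sin_ofReal_re, Complex.sin_ofReal_im, show ((-(σ * x ^ 2) : ℝ) : ℂ) = ((-(σ * x ^ 2) : ℝ) : ℂ) from rfl, ← Complex.ofReal_exp, ← Complex.ofReal_mul]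
    _ = √(π / σ) * rexp (-t ^ 2 / (4 * σ)) := by
        rw [key, show (-(t:ℂ) ^ 2 / (4 * σ)) = ((-t ^ 2 / (4 * σ) : ℝ) : ℂ) by push_cast; ring,
          ← Complex.ofReal_exp, ← Complex.ofReal_mul, Complex.ofReal_re]


-- sin bound helper
lemma sin_div_bound (y x : ℝ) : |Real.sin (x * y) / x| ≤ |y| := by
  rcases eq_or_ne x 0 with rfl | hx
  · simp
  · rw [abs_div]
    rw [div_le_iff₀ (abs_pos.mpr hx)]
    calc |Real.sin (x * y)| ≤ |x * y| := Real.abs_sin_le_abs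
      _ = |y| * |x| := by rw [abs_mul]; ring

lemma meas_h (σ y : ℝ) : AEStronglyMeasurable
    (fun x : ℝ => rexp (-(σ * x ^ 2)) * (Real.sin (x * y) / x)) volume := by
  apply Measurable.aestronglyMeasurable
  fun_prop

lemma int_h (σ : ℝ) (hσ : 0 < σ) (y : ℝ) :
    Integrable (fun x : ℝ => rexp (-(σ * x ^ 2)) * (Real.sin (x * y) / x)) := by
  refine ((integrable_exp_neg_mul_sq hσ).const_mul |y|).mono' (meas_h σ y) ?_
  refine Filter.Eventually.of_forall fun x => ?_
  rw [Real.norm_eq_abs, abs_mul, abs_of_nonneg (Real.exp_nonneg _)]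
  calc rexp (-(σ * x ^ 2)) * |Real.sin (x * y) / x| ≤ rexp (-(σ * x ^ 2)) * |y| := by
        exact mul_le_mul_of_nonneg_left (sin_div_bound y x) (Real.exp_nonneg _)
    _ = |y| * rexp (-σ * x ^ 2) := by rw [neg_mul]; ring


lemma hasDeriv_L (σ : ℝ) (hσ : 0 < σ) (y₀ : ℝ) :
    HasDerivAt (fun y => ∫ x : ℝ, rexp (-(σ * x ^ 2)) * (Real.sin (x * y) / x))
      (Real.sqrt (π / σ) * rexp (-(y₀ ^ 2) / (4 * σ))) y₀ := by
  have hae : ∀ᵐ x : ℝ, x ≠ 0 := by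
    refine (ae_iff).mpr ?_
    simpa using measure_singleton (0 : ℝ)
  have key := hasDerivAt_integral_of_dominated_loc_of_deriv_le (μ := volume)
      (F := fun y x => rexp (-(σ * x ^ 2)) * (Real.sin (x * y) / x))
      (F' := fun y x => rexp (-(σ * x ^ 2)) * Real.cos (x * y))
      (x₀ := y₀) (bound := fun x => rexp (-σ * x ^ 2)) (Metric.ball_mem_nhds y₀ one_pos)
      (Filter.Eventually.of_forall fun y => meas_h σ y)
      (int_h σ hσ y₀)
      (by apply Measurable.aestronglyMeasurable; fun_prop)
      (Filter.Eventually.of_forall fun x => fun y hy => ?_)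
      (integrable_exp_neg_mul_sq hσ)
      (hae.mono fun x hx => fun y hy => ?_)
  · have := key.2
    rwa [show (∫ x : ℝ, rexp (-(σ * x ^ 2)) * Real.cos (x * y₀))
        = √(π / σ) * rexp (-(y₀ ^ 2) / (4 * σ)) from ?_] at this
    rw [← cos_gaussian σ hσ y₀]
    congr 1; ext x; rw [mul_comm x y₀]; ring
  · simp only [Real.norm_eq_abs, abs_mul, abs_of_nonneg (Real.exp_nonneg _)]
    rw [show -σ * x ^ 2 = -(σ * x ^ 2) by ring]
    calc rexp (-(σ * x ^ 2)) * |Real.cos (x * y)| ≤ rexp (-(σ * x ^ 2)) * 1 :=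
          mul_le_mul_of_nonneg_left (Real.abs_cos_le_one _) (Real.exp_nonneg _)
      _ = rexp (-(σ * x ^ 2)) := mul_one _
  · have h1 : HasDerivAt (fun y : ℝ => x * y) x y := by
      simpa using (hasDerivAt_id y).const_mul x
    have h2 : HasDerivAt (fun y : ℝ => Real.sin (x * y)) (Real.cos (x * y) * x) y :=
      (Real.hasDerivAt_sin (x * y)).comp y h1
    have h3 := (h2.div_const x).const_mul (rexp (-(σ * x ^ 2)))
    rwa [mul_div_cancel_right₀ _ hx] at h3

lemma L_eq (σ : ℝ) (hσ : 0 < σ) (y : ℝ) :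
    ∫ x : ℝ, rexp (-(σ * x ^ 2)) * (Real.sin (x * y) / x)
      = ∫ t in (0:ℝ)..y, Real.sqrt (π / σ) * rexp (-(t ^ 2) / (4 * σ)) := by
  have hcont : Continuous fun t : ℝ => Real.sqrt (π / σ) * rexp (-(t ^ 2) / (4 * σ)) := by
    fun_prop
  have := intervalIntegral.integral_eq_sub_of_hasDerivAt
    (f := fun y => ∫ x : ℝ, rexp (-(σ * x ^ 2)) * (Real.sin (x * y) / x))
    (f' := fun t => Real.sqrt (π / σ) * rexp (-(t ^ 2) / (4 * σ)))
    (a := 0) (b := y)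
    (fun t _ => hasDeriv_L σ hσ t) (hcont.intervalIntegrable 0 y)
  rw [this]
  simp

lemma subst_eq (σ : ℝ) (hσ : 0 < σ) (y : ℝ) :
    ∫ t in (0:ℝ)..y, Real.sqrt (π / σ) * rexp (-(t ^ 2) / (4 * σ))
      = 2 * Real.sqrt π * ∫ u in (0:ℝ)..(y / (2 * Real.sqrt σ)), rexp (-u ^ 2) := by
  have hc : (2 * Real.sqrt σ) ≠ 0 := by positivity
  have key := intervalIntegral.integral_comp_mul_left
    (f := fun t => rexp (-(t ^ 2) / (4 * σ))) (a := (0:ℝ)) (b := y / (2 * Real.sqrt σ)) (c := 2 * Real.sqrt σ) hc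
  have hsq : (2 * Real.sqrt σ) ^ 2 = 4 * σ := by
    rw [mul_pow, Real.sq_sqrt hσ.le]; ring
  have heq : ∀ u : ℝ, rexp (-((2 * Real.sqrt σ * u) ^ 2) / (4 * σ)) = rexp (-u ^ 2) := by
    intro u
    congr 1
    rw [mul_pow, hsq]
    field_simp
  rw [mul_zero, mul_div_cancel₀ _ hc] at key
  simp only [heq] at key
  rw [intervalIntegral.integral_const_mul, key, smul_eq_mul,
    Real.sqrt_div Real.pi_nonneg σ]
  have h4 : Real.sqrt σ ≠ 0 := by positivity
  field_simp


lemma odd_setIntegral_zero (f : ℝ → ℝ) (hf : ∀ x, f (-x) = - f x)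
    {S : Set ℝ} (hmS : MeasurableSet S) (hS : ∀ x, -x ∈ S ↔ x ∈ S) :
    ∫ x in S, f x = 0 := by
  have h1 : ∫ x in S, f x = ∫ x : ℝ, S.indicator f x := (integral_indicator hmS).symm
  have h2 : ∫ x : ℝ, S.indicator f (-x) = ∫ x : ℝ, S.indicator f x :=
    integral_neg_eq_self _ volume
  have h3 : ∀ x : ℝ, S.indicator f (-x) = - S.indicator f x := by
    intro x
    by_cases hx : x ∈ S
    · rw [Set.indicator_of_mem ((hS x).mpr hx), Set.indicator_of_mem hx, hf]
    · rw [Set.indicator_of_notMem (fun h => hx ((hS x).mp h)),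
        Set.indicator_of_notMem hx, neg_zero]
  simp only [h3, integral_neg] at h2
  rw [h1]
  linarith

lemma split_integral (σ : ℝ) (hσ : 0 < σ) (y ε : ℝ) (hε : 0 < ε) :
    ∫ ξ in {ξ : ℝ | ε ≤ |ξ|},
        Complex.exp (Complex.I * ξ * y) * Complex.exp (-(σ * ξ ^ 2 : ℝ)) / (Complex.I * ξ)
      = Complex.ofReal (∫ ξ in {ξ : ℝ | ε ≤ |ξ|},
          Real.exp (-(σ * ξ ^ 2)) * (Real.sin (ξ * y) / ξ)) := by
  set S : Set ℝ := {ξ : ℝ | ε ≤ |ξ|} with hSdef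
  have hmS : MeasurableSet S := by
    have : S = (fun ξ : ℝ => |ξ|) ⁻¹' Set.Ici ε := rfl
    rw [this]; exact (measurable_abs) measurableSet_Ici
  have hgauss : Integrable (fun x : ℝ => Real.exp (-(σ * x ^ 2))) := by
    refine (integrable_exp_neg_mul_sq hσ).congr (Filter.Eventually.of_forall fun x => ?_)
    simp [neg_mul]
  -- h : sin part, k : cos part
  set h : ℝ → ℝ := fun ξ => Real.exp (-(σ * ξ ^ 2)) * (Real.sin (ξ * y) / ξ) with hh
  set k : ℝ → ℝ := fun ξ => Real.exp (-(σ * ξ ^ 2)) * (Real.cos (ξ * y) / ξ) with hk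
  have hmk : AEStronglyMeasurable k volume := by
    apply Measurable.aestronglyMeasurable; fun_prop
  have hint_h : IntegrableOn h S := by
    refine Integrable.integrableOn ?_
    refine (hgauss.const_mul |y|).mono' (by apply Measurable.aestronglyMeasurable; fun_prop) ?_
    refine Filter.Eventually.of_forall fun x => ?_
    rw [Real.norm_eq_abs, abs_mul, abs_of_nonneg (Real.exp_nonneg _)]
    calc Real.exp (-(σ * x ^ 2)) * |Real.sin (x * y) / x|
        ≤ Real.exp (-(σ * x ^ 2)) * |y| := by
          refine mul_le_mul_of_nonneg_left ?_ (Real.exp_nonneg _)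
          rcases eq_or_ne x 0 with rfl | hx
          · simp
          · rw [abs_div, div_le_iff₀ (abs_pos.mpr hx)]
            calc |Real.sin (x * y)| ≤ |x * y| := Real.abs_sin_le_abs
              _ = |y| * |x| := by rw [abs_mul]; ring
      _ = |y| * Real.exp (-(σ * x ^ 2)) := by ring
  have hint_k : IntegrableOn k S := by
    refine Integrable.mono' ((hgauss.const_mul ε⁻¹).integrableOn) hmk.restrict ?_
    refine (ae_restrict_iff' hmS).mpr (Filter.Eventually.of_forall fun x hx => ?_)
    have hx0 : x ≠ 0 := by
      intro h0; rw [h0] at hx; simp only [hSdef, Set.mem_setOf_eq, abs_zero] at hx; linarith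
    rw [Real.norm_eq_abs, abs_mul, abs_of_nonneg (Real.exp_nonneg _), abs_div]
    calc Real.exp (-(σ * x ^ 2)) * (|Real.cos (x * y)| / |x|)
        ≤ Real.exp (-(σ * x ^ 2)) * (1 / ε) := by
          refine mul_le_mul_of_nonneg_left ?_ (Real.exp_nonneg _)
          refine div_le_div₀ (by norm_num) (Real.abs_cos_le_one _) hε hx
      _ = ε⁻¹ * Real.exp (-(σ * x ^ 2)) := by ring
  have hptwise : ∀ ξ : ℝ, ξ ≠ 0 →
      Complex.exp (Complex.I * ξ * y) * Complex.exp (-(σ * ξ ^ 2 : ℝ)) / (Complex.I * ξ)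
        = Complex.ofReal (h ξ) + (-Complex.I) * Complex.ofReal (k ξ) := by
    intro ξ hξ
    have hξC : (ξ : ℂ) ≠ 0 := Complex.ofReal_ne_zero.mpr hξ
    rw [show (Complex.I * ξ * y) = ((ξ * y : ℝ) : ℂ) * Complex.I by push_cast; ring,
      Complex.exp_mul_I]
    rw [div_eq_iff (by simp [Complex.I_ne_zero, hξC] : Complex.I * (ξ:ℂ) ≠ 0)]
    simp only [hh, hk]
    push_cast
    field_simp
    ring_nf
    rw [Complex.I_sq]
    ring
  have : ∫ ξ in S, Complex.exp (Complex.I * ξ * y) * Complex.exp (-(σ * ξ ^ 2 : ℝ)) / (Complex.I * ξ)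
      = ∫ ξ in S, (Complex.ofReal (h ξ) + (-Complex.I) * Complex.ofReal (k ξ)) := by
    refine setIntegral_congr_ae hmS ?_
    have hae : ∀ᵐ ξ : ℝ, ξ ≠ 0 := by
      refine (ae_iff).mpr ?_; simpa using measure_singleton (0 : ℝ)
    filter_upwards [hae] with ξ hξ _
    exact hptwise ξ hξ
  rw [this, integral_add, MeasureTheory.integral_const_mul]
  · have hk0 : ∫ ξ in S, k ξ = 0 := by
      refine odd_setIntegral_zero k ?_ hmS ?_
      · intro x
        simp only [hk]
        rcases eq_or_ne x 0 with rfl | hx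
        · simp
        · rw [neg_pow, neg_mul, Real.cos_neg]
          field_simp
      · intro x; simp [hSdef]
    have : ∫ ξ in S, Complex.ofReal (k ξ) = Complex.ofReal (∫ ξ in S, k ξ) := integral_ofReal
    rw [this, hk0]
    have : ∫ ξ in S, Complex.ofReal (h ξ) = Complex.ofReal (∫ ξ in S, h ξ) := integral_ofReal
    rw [this]
    simp
  · exact (hint_h.ofReal)
  · exact ((hint_k.ofReal).const_mul _)



lemma tendsto_setInt (σ : ℝ) (hσ : 0 < σ) (y : ℝ) :
    Filter.Tendsto (fun ε : ℝ => ∫ ξ in {ξ : ℝ | ε ≤ |ξ|},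
        rexp (-(σ * ξ ^ 2)) * (Real.sin (ξ * y) / ξ))
      (nhdsWithin 0 (Set.Ioi 0))
      (nhds (∫ ξ : ℝ, rexp (-(σ * ξ ^ 2)) * (Real.sin (ξ * y) / ξ))) := by
  set h : ℝ → ℝ := fun ξ => rexp (-(σ * ξ ^ 2)) * (Real.sin (ξ * y) / ξ) with hh
  set L : ℝ := ∫ ξ : ℝ, h ξ with hL
  rw [tendsto_iff_dist_tendsto_zero]
  have key : ∀ ε : ℝ, 0 < ε → dist (∫ ξ in {ξ : ℝ | ε ≤ |ξ|}, h ξ) L ≤ 2 * |y| * ε := by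
    intro ε hε
    have hmS : MeasurableSet {ξ : ℝ | ε ≤ |ξ|} :=
      (measurable_abs) measurableSet_Ici
    have hcompl : {ξ : ℝ | ε ≤ |ξ|}ᶜ = Set.Ioo (-ε) ε := by
      ext x; simp [not_le, abs_lt]
    have hsplit := integral_add_compl hmS (int_h σ hσ y)
    rw [Real.dist_eq, show (∫ ξ in {ξ : ℝ | ε ≤ |ξ|}, h ξ) - L
        = -(∫ ξ in {ξ : ℝ | ε ≤ |ξ|}ᶜ, h ξ) by rw [hL, ← hsplit]; ring, abs_neg]
    rw [hcompl]
    have hb : ∀ x ∈ Set.Ioo (-ε) ε, ‖h x‖ ≤ |y| := by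
      intro x _
      rw [Real.norm_eq_abs, hh, abs_mul, abs_of_nonneg (Real.exp_nonneg _)]
      calc rexp (-(σ * x ^ 2)) * |Real.sin (x * y) / x|
          ≤ 1 * |y| := by
            refine mul_le_mul (Real.exp_le_one_iff.mpr (neg_nonpos.mpr (by positivity))) ?_ (abs_nonneg _)
              zero_le_one
            rcases eq_or_ne x 0 with rfl | hx
            · simp
            · rw [abs_div, div_le_iff₀ (abs_pos.mpr hx)]
              calc |Real.sin (x * y)| ≤ |x * y| := Real.abs_sin_le_abs
                _ = |y| * |x| := by rw [abs_mul]; ring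
        _ = |y| := one_mul _
    have := norm_setIntegral_le_of_norm_le_const (μ := volume) (s := Set.Ioo (-ε) ε)
      (f := h) (C := |y|) (by rw [Real.volume_Ioo]; exact ENNReal.ofReal_lt_top) hb
    rw [Real.norm_eq_abs] at this
    refine this.trans ?_
    rw [Measure.real, Real.volume_Ioo, ENNReal.toReal_ofReal (by linarith)]
    rw [show ε - -ε = 2 * ε by ring]
    rw [show |y| * (2 * ε) = 2 * |y| * ε by ring]
  have h0 : Filter.Tendsto (fun ε : ℝ => 2 * |y| * ε) (nhdsWithin 0 (Set.Ioi 0)) (nhds 0) := by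
    have : Filter.Tendsto (fun ε : ℝ => 2 * |y| * ε) (nhds 0) (nhds 0) := by
      simpa using (Filter.tendsto_id (α := ℝ) (x := nhds (0:ℝ))).const_mul (2 * |y|)
    exact this.mono_left nhdsWithin_le_nhds
  refine squeeze_zero' ?_ ?_ h0
  · exact Filter.eventually_iff_exists_mem.mpr ⟨Set.Ioi 0, self_mem_nhdsWithin,
      fun ε hε => dist_nonneg⟩
  · exact Filter.eventually_iff_exists_mem.mpr ⟨Set.Ioi 0, self_mem_nhdsWithin,
      fun ε hε => key ε hε⟩


lemma erf_bound (c : ℝ) :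
    |2 * Real.sqrt π * ∫ u in (0:ℝ)..c, rexp (-u ^ 2)| ≤ π := by
  have habs : |∫ u in (0:ℝ)..c, rexp (-u ^ 2)| = ∫ u in (0:ℝ)..|c|, rexp (-u ^ 2) := by
    rcases le_or_gt 0 c with hc | hc
    · rw [abs_of_nonneg hc, abs_of_nonneg]
      exact intervalIntegral.integral_nonneg hc (fun u _ => (Real.exp_nonneg _))
    · rw [abs_of_neg hc]
      have : ∫ u in (0:ℝ)..c, rexp (-u ^ 2) = -∫ u in (0:ℝ)..(-c), rexp (-u ^ 2) := by
        have := intervalIntegral.integral_comp_neg (a := (0:ℝ)) (b := -c)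
          (fun u => rexp (-u ^ 2))
        simp only [neg_neg, neg_zero] at this
        have heven : ∫ u in (0:ℝ)..(-c), rexp (-u ^ 2) = ∫ x in c..(0:ℝ), rexp (-x ^ 2) := by
          rw [← this]; congr 1; ext u; ring_nf
        rw [heven, intervalIntegral.integral_symm]
      rw [this, abs_neg, abs_of_nonneg]
      exact intervalIntegral.integral_nonneg (by linarith) (fun u _ => (Real.exp_nonneg _))
  have hIoi : ∫ u in (0:ℝ)..|c|, rexp (-u ^ 2) ≤ Real.sqrt π / 2 := by
    have hint : IntegrableOn (fun u : ℝ => rexp (-u ^ 2)) (Set.Ioi 0) := by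
      have := (integrable_exp_neg_mul_sq (b := 1) one_pos)
      refine (this.congr (Filter.Eventually.of_forall fun x => by norm_num)).integrableOn
    rw [intervalIntegral.integral_of_le (abs_nonneg c)]
    calc ∫ u in Set.Ioc 0 |c|, rexp (-u ^ 2)
        ≤ ∫ u in Set.Ioi 0, rexp (-u ^ 2) := by
          refine setIntegral_mono_set hint ?_ ?_
          · exact Filter.Eventually.of_forall fun u => Real.exp_nonneg _
          · exact Filter.Eventually.of_forall fun u hu => hu.1
      _ = Real.sqrt π / 2 := by
          have := integral_gaussian_Ioi 1
          simp only [neg_mul, one_mul, div_one] at this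
          exact this
  rw [abs_mul, habs, abs_of_nonneg (by positivity : (0:ℝ) ≤ 2 * Real.sqrt π)]
  calc 2 * Real.sqrt π * ∫ u in (0:ℝ)..|c|, rexp (-u ^ 2)
      ≤ 2 * Real.sqrt π * (Real.sqrt π / 2) := by
        refine mul_le_mul_of_nonneg_left hIoi (by positivity)
    _ = Real.sqrt π * Real.sqrt π := by ring
    _ = π := Real.mul_self_sqrt Real.pi_nonneg


end Stmt16Aux

open MeasureTheory

/-- the principal-value Gaussian kernel is an error function; used in
the proof of Proposition `greenbdsg`, estimate (finaleundiffcg):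
`p.v. ∫_ℝ e^{iξy} e^{-σξ²} (iξ)⁻¹ dξ = 2√π ∫_0^{y/(2√σ)} e^{-u²} du`, and its modulus is
at most `π`, uniformly in `y ∈ ℝ` and `σ > 0`. -/
theorem stmt_16 (σ : ℝ) (hσ : 0 < σ) (y : ℝ) :
    Filter.Tendsto
        (fun ε : ℝ => ∫ ξ in {ξ : ℝ | ε ≤ |ξ|},
          Complex.exp (Complex.I * ξ * y) * Complex.exp (-(σ * ξ ^ 2 : ℝ)) / (Complex.I * ξ))
        (nhdsWithin 0 (Set.Ioi 0))
        (nhds (Complex.ofReal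
          (2 * Real.sqrt Real.pi *
            ∫ u in (0:ℝ)..(y / (2 * Real.sqrt σ)), Real.exp (-u ^ 2)))) ∧
      |2 * Real.sqrt Real.pi * ∫ u in (0:ℝ)..(y / (2 * Real.sqrt σ)), Real.exp (-u ^ 2)|
        ≤ Real.pi := by
  constructor
  · have h1 := Stmt16Aux.tendsto_setInt σ hσ y
    have hval : (∫ ξ : ℝ, Real.exp (-(σ * ξ ^ 2)) * (Real.sin (ξ * y) / ξ))
        = 2 * Real.sqrt Real.pi * ∫ u in (0:ℝ)..(y / (2 * Real.sqrt σ)), Real.exp (-u ^ 2) := by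
      rw [Stmt16Aux.L_eq σ hσ y, Stmt16Aux.subst_eq σ hσ y]
    rw [hval] at h1
    have h2 := (Complex.continuous_ofReal.tendsto _).comp h1
    refine Filter.Tendsto.congr' ?_ h2
    filter_upwards [self_mem_nhdsWithin] with ε hε
    exact (Stmt16Aux.split_integral σ hσ y ε hε).symm
  · exact Stmt16Aux.erf_bound _
end

section
/- Let m ≥ 1, let I ⊆ ℝ be an open interval, let A, B: ℝ × I → ℝ^m be continuously differentiable functions satisfying the conservation law ∂_t A + ∂_x B = 0 pointwise on ℝ × I, and let Φ: ℝ × I → ℝ be twice continuously differentiable. Define Ã(x,t) := A(Φ(x,t), t) and B̃(x,t) := B(Φ(x,t), t). Then pointwise on ℝ × I: ∂_t ( (∂_x Φ) Ã ) + ∂_x ( B̃ − (∂_t Φ) Ã ) = 0. -/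
open MeasureTheory

section Aux

variable {E : Type*} [NormedAddCommGroup E] [NormedSpace ℝ E]

lemma aux_comp_fst {f : ℝ × ℝ → E} {c : ℝ → ℝ} {c' x₀ t₀ : ℝ}
    (hf : DifferentiableAt ℝ f (c x₀, t₀)) (hc : HasDerivAt c c' x₀) :
    HasDerivAt (fun y => f (c y, t₀)) (fderiv ℝ f (c x₀, t₀) (c', 0)) x₀ := by
  have h := hf.hasFDerivAt.comp_hasDerivAt x₀ (hc.prodMk (hasDerivAt_const x₀ t₀))
  simpa [Function.comp_def] using h

lemma aux_comp_snd {f : ℝ × ℝ → E} {c : ℝ → ℝ} {c' t₀ : ℝ}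
    (hf : DifferentiableAt ℝ f (c t₀, t₀)) (hc : HasDerivAt c c' t₀) :
    HasDerivAt (fun s => f (c s, s)) (fderiv ℝ f (c t₀, t₀) (c', 1)) t₀ := by
  have h1 : HasDerivAt (fun s => ((c s, s) : ℝ × ℝ)) (c', 1) t₀ := hc.prodMk (hasDerivAt_id t₀)
  have h := HasFDerivAt.comp_hasDerivAt_of_eq t₀ hf.hasFDerivAt h1 rfl
  simpa [Function.comp_def] using h

lemma aux_comp_const {f : ℝ × ℝ → E} {a t₀ : ℝ}
    (hf : DifferentiableAt ℝ f (a, t₀)) :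
    HasDerivAt (fun s => f (a, s)) (fderiv ℝ f (a, t₀) (0, 1)) t₀ := by
  have h := hf.hasFDerivAt.comp_hasDerivAt t₀ ((hasDerivAt_const t₀ a).prodMk (hasDerivAt_id t₀))
  simpa [Function.comp_def] using h

end Aux

/-- transformation of a conservation law under a time-dependent change
of the spatial variable, Section `s:implicitchange`: if `∂_t A + ∂_x B = 0` on `ℝ × I`
and `Ã(x,t) = A(Φ(x,t),t)`, `B̃(x,t) = B(Φ(x,t),t)`, then
`∂_t((∂_xΦ) Ã) + ∂_x(B̃ - (∂_tΦ) Ã) = 0` on `ℝ × I`. -/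
theorem stmt_18 (m : ℕ) (hm : 1 ≤ m) (I : Set ℝ) (hIo : IsOpen I) (hIc : I.OrdConnected)
    (A B : ℝ → ℝ → EuclideanSpace ℝ (Fin m))
    (hA : ContDiffOn ℝ 1 (fun pr : ℝ × ℝ => A pr.1 pr.2) (Set.univ ×ˢ I))
    (hB : ContDiffOn ℝ 1 (fun pr : ℝ × ℝ => B pr.1 pr.2) (Set.univ ×ˢ I))
    (hcons : ∀ x : ℝ, ∀ t ∈ I,
      deriv (fun s => A x s) t + deriv (fun y => B y t) x = 0)
    (Φ : ℝ → ℝ → ℝ)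
    (hΦ : ContDiffOn ℝ 2 (fun pr : ℝ × ℝ => Φ pr.1 pr.2) (Set.univ ×ˢ I)) :
    ∀ x : ℝ, ∀ t ∈ I,
      deriv (fun s => deriv (fun y => Φ y s) x • A (Φ x s) s) t
        + deriv (fun y => B (Φ y t) t - deriv (fun s => Φ y s) t • A (Φ y t) t) x = 0 := by
  intro x t ht
  set U : Set (ℝ × ℝ) := Set.univ ×ˢ I with hUdef
  have hU : IsOpen U := isOpen_univ.prod hIo
  have hmem : ∀ y s : ℝ, s ∈ I → (y, s) ∈ U := fun y s hs => ⟨trivial, hs⟩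
  set F : ℝ × ℝ → ℝ := fun p => Φ p.1 p.2 with hF
  set FA : ℝ × ℝ → EuclideanSpace ℝ (Fin m) := fun p => A p.1 p.2 with hFA
  set FB : ℝ × ℝ → EuclideanSpace ℝ (Fin m) := fun p => B p.1 p.2 with hFB
  set G : ℝ × ℝ → (ℝ × ℝ) →L[ℝ] ℝ := fun p => fderiv ℝ F p with hGdef
  have hG : ContDiffOn ℝ 1 G U := hΦ.fderiv_of_isOpen hU (by norm_num)
  set Φx : ℝ × ℝ → ℝ := fun p => G p (1, 0) with hΦxdef
  set Φt : ℝ × ℝ → ℝ := fun p => G p (0, 1) with hΦtdef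
  have hΦxC : ContDiffOn ℝ 1 Φx U :=
    (ContinuousLinearMap.apply ℝ ℝ ((1, 0) : ℝ × ℝ)).contDiff.comp_contDiffOn hG
  have hΦtC : ContDiffOn ℝ 1 Φt U :=
    (ContinuousLinearMap.apply ℝ ℝ ((0, 1) : ℝ × ℝ)).contDiff.comp_contDiffOn hG
  have hFdiff : ∀ p ∈ U, DifferentiableAt ℝ F p := fun p hp =>
    (hΦ.contDiffAt (hU.mem_nhds hp)).differentiableAt two_ne_zero
  have hFAdiff : ∀ p ∈ U, DifferentiableAt ℝ FA p := fun p hp =>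
    (hA.contDiffAt (hU.mem_nhds hp)).differentiableAt one_ne_zero
  have hFBdiff : ∀ p ∈ U, DifferentiableAt ℝ FB p := fun p hp =>
    (hB.contDiffAt (hU.mem_nhds hp)).differentiableAt one_ne_zero
  -- partial derivatives of Φ
  have hHx : ∀ y s : ℝ, s ∈ I → HasDerivAt (fun y' => Φ y' s) (Φx (y, s)) y := by
    intro y s hs
    have h := aux_comp_fst (c := id) (hFdiff (y, s) (hmem y s hs)) (hasDerivAt_id y)
    simpa [F] using h
  have hHt : ∀ y s : ℝ, s ∈ I → HasDerivAt (fun s' => Φ y s') (Φt (y, s)) s := by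
    intro y s hs
    have h := aux_comp_const (hFdiff (y, s) (hmem y s hs))
    simpa [F] using h
  set p : ℝ × ℝ := (x, t) with hpdef
  set q : ℝ × ℝ := (Φ x t, t) with hqdef
  have hpU : p ∈ U := hmem x t ht
  have hqU : q ∈ U := hmem _ t ht
  -- symmetry of second derivatives
  have hGdiff : DifferentiableAt ℝ G p := (hG.contDiffAt (hU.mem_nhds hpU)).differentiableAt one_ne_zero
  have hΦxfd : HasFDerivAt Φx
      ((ContinuousLinearMap.apply ℝ ℝ ((1, 0) : ℝ × ℝ)).comp (fderiv ℝ G p)) p :=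
    (ContinuousLinearMap.apply ℝ ℝ ((1, 0) : ℝ × ℝ)).hasFDerivAt.comp p hGdiff.hasFDerivAt
  have hΦtfd : HasFDerivAt Φt
      ((ContinuousLinearMap.apply ℝ ℝ ((0, 1) : ℝ × ℝ)).comp (fderiv ℝ G p)) p :=
    (ContinuousLinearMap.apply ℝ ℝ ((0, 1) : ℝ × ℝ)).hasFDerivAt.comp p hGdiff.hasFDerivAt
  have hsym : fderiv ℝ G p (0, 1) (1, 0) = fderiv ℝ G p (1, 0) (0, 1) := by
    have h2 : ContDiffAt ℝ 2 F p := hΦ.contDiffAt (hU.mem_nhds hpU)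
    exact h2.isSymmSndFDerivAt (by simp [minSmoothness_of_isRCLikeNormedField]) (0, 1) (1, 0)
  -- the first summand
  have hT1 : HasDerivAt (fun s => Φx (x, s) • FA (Φ x s, s))
      (Φx p • fderiv ℝ FA q (Φt p, 1) + (fderiv ℝ G p (0, 1) (1, 0)) • FA q) t := by
    have h1 : HasDerivAt (fun s => Φx (x, s)) (fderiv ℝ Φx p (0, 1)) t :=
      aux_comp_const (hΦxfd.differentiableAt)
    have h2 : HasDerivAt (fun s => FA (Φ x s, s)) (fderiv ℝ FA q (Φt p, 1)) t :=
      aux_comp_snd (hFAdiff q hqU) (hHt x t ht)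
    have h3 := h1.smul h2
    rw [hΦxfd.fderiv] at h3
    exact h3
  have hT1' : deriv (fun s => deriv (fun y => Φ y s) x • A (Φ x s) s) t
      = Φx p • fderiv ℝ FA q (Φt p, 1) + (fderiv ℝ G p (0, 1) (1, 0)) • FA q := by
    have hev : (fun s => deriv (fun y => Φ y s) x • A (Φ x s) s)
        =ᶠ[nhds t] (fun s => Φx (x, s) • FA (Φ x s, s)) := by
      filter_upwards [hIo.mem_nhds ht] with s hs
      rw [(hHx x s hs).deriv]
    rw [hev.deriv_eq, hT1.deriv]
  -- the second summand
  have hT2 : HasDerivAt (fun y => FB (Φ y t, t) - Φt (y, t) • FA (Φ y t, t))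
      (fderiv ℝ FB q (Φx p, 0)
        - (Φt p • fderiv ℝ FA q (Φx p, 0) + (fderiv ℝ G p (1, 0) (0, 1)) • FA q)) x := by
    have h1 : HasDerivAt (fun y => FB (Φ y t, t)) (fderiv ℝ FB q (Φx p, 0)) x :=
      aux_comp_fst (c := fun y => Φ y t) (hFBdiff q hqU) (hHx x t ht)
    have h2 : HasDerivAt (fun y => Φt (y, t)) (fderiv ℝ Φt p (1, 0)) x := by
      have h := aux_comp_fst (f := Φt) (c := id) (hΦtfd.differentiableAt) (hasDerivAt_id x)
      simpa using h
    have h3 : HasDerivAt (fun y => FA (Φ y t, t)) (fderiv ℝ FA q (Φx p, 0)) x :=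
      aux_comp_fst (c := fun y => Φ y t) (hFAdiff q hqU) (hHx x t ht)
    have h4 := h1.sub (h2.smul h3)
    rw [hΦtfd.fderiv] at h4
    exact h4
  have hT2' : deriv (fun y => B (Φ y t) t - deriv (fun s => Φ y s) t • A (Φ y t) t) x
      = fderiv ℝ FB q (Φx p, 0)
        - (Φt p • fderiv ℝ FA q (Φx p, 0) + (fderiv ℝ G p (1, 0) (0, 1)) • FA q) := by
    have heq : (fun y => B (Φ y t) t - deriv (fun s => Φ y s) t • A (Φ y t) t)
        = (fun y => FB (Φ y t, t) - Φt (y, t) • FA (Φ y t, t)) := by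
      funext y
      rw [(hHt y t ht).deriv]
    rw [heq, hT2.deriv]
  -- conservation law at q
  have hcons' : fderiv ℝ FA q (0, 1) + fderiv ℝ FB q (1, 0) = 0 := by
    have h1 : HasDerivAt (fun s => A (Φ x t) s) (fderiv ℝ FA q (0, 1)) t := by
      have h := aux_comp_const (hFAdiff q hqU)
      simpa [FA] using h
    have h2 : HasDerivAt (fun y => B y t) (fderiv ℝ FB q (1, 0)) (Φ x t) := by
      have h := aux_comp_fst (c := id) (hFBdiff q hqU) (hasDerivAt_id (Φ x t))
      simpa [FB] using h
    rw [← h1.deriv, ← h2.deriv]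
    exact hcons (Φ x t) t ht
  -- linear expansions
  have hexp1 : fderiv ℝ FA q (Φt p, 1)
      = Φt p • fderiv ℝ FA q (1, 0) + fderiv ℝ FA q (0, 1) := by
    have : ((Φt p, (1 : ℝ)) : ℝ × ℝ) = Φt p • ((1, 0) : ℝ × ℝ) + ((0, 1) : ℝ × ℝ) := by
      simp [Prod.ext_iff]
    rw [this, (fderiv ℝ FA q).map_add, (fderiv ℝ FA q).map_smul]
  have hexp2 : fderiv ℝ FA q (Φx p, 0) = Φx p • fderiv ℝ FA q (1, 0) := by
    have : ((Φx p, (0 : ℝ)) : ℝ × ℝ) = Φx p • ((1, 0) : ℝ × ℝ) := by simp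
    rw [this, (fderiv ℝ FA q).map_smul]
  have hexp3 : fderiv ℝ FB q (Φx p, 0) = Φx p • fderiv ℝ FB q (1, 0) := by
    have : ((Φx p, (0 : ℝ)) : ℝ × ℝ) = Φx p • ((1, 0) : ℝ × ℝ) := by simp
    rw [this, (fderiv ℝ FB q).map_smul]
  rw [hT1', hT2', hsym, hexp1, hexp2, hexp3]
  have hc : fderiv ℝ FA q (0, 1) = -fderiv ℝ FB q (1, 0) := by
    linear_combination (norm := module) hcons'
  rw [hc]
  module
end
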